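/- arXiv:1104.1217 — 6 statements merged into one kernel-verified Lean document; each statement's English description precedes it below -/
import Mathlib

section
/- Let p = 2ρ for a natural number ρ ≥ 1, and suppose E[|X|^p] < ∞ and E[|Z|^p] < ∞. Let h : ℝ → ℝ be Borel measurable with E[|h(Y)|^p] < ∞, and suppose h satisfies the orthogonality condition: E[(X − h(Y))^{p−1} · η(Y)] = 0 for every Borel measurable η : ℝ → ℝ with E[|X − h(Y)|^{p−1} · |η(Y)|] < ∞. Then h is L_p optimal, i.e., for every Borel measurable g : ℝ → ℝ with E[|X − g(Y)|^p] < ∞ one has E[|X − h(Y)|^p] ≤ E[|X − g(Y)|^p]. -/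
open MeasureTheory ProbabilityTheory

open Set in
/-- Tangent-line inequality for the even power function. -/
lemma tangent_pow_aux {p : ℕ} (hp : Even p) (u v : ℝ) :
    u ^ p + p * u ^ (p - 1) * v ≤ (u + v) ^ p := by
  have hconv : ConvexOn ℝ univ (fun x : ℝ => x ^ p) := Even.convexOn_pow hp
  have hder : HasDerivAt (fun x : ℝ => x ^ p) ((p : ℝ) * u ^ (p - 1)) u := hasDerivAt_pow p u
  rcases lt_trichotomy v 0 with hv | hv | hv
  · have := hconv.slope_le_of_hasDerivAt (mem_univ (u + v)) (mem_univ u) (by linarith) hder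
    rw [slope_def_field, div_le_iff₀ (by linarith : (0:ℝ) < u - (u + v))] at this
    nlinarith [this]
  · simp [hv]
  · have := hconv.le_slope_of_hasDerivAt (mem_univ u) (mem_univ (u + v)) (by linarith) hder
    rw [slope_def_field, le_div_iff₀ (by linarith : (0:ℝ) < (u + v) - u)] at this
    nlinarith [this]

lemma abs_sub_pow_le_aux (p : ℕ) (a b : ℝ) :
    |a - b| ^ p ≤ 2 ^ p * (|a| ^ p + |b| ^ p) := by
  have h1 : |a - b| ≤ 2 * max |a| |b| := by
    refine (abs_sub _ _).trans ?_
    have := le_max_left |a| |b|; have := le_max_right |a| |b|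
    linarith
  have h2 : |a - b| ^ p ≤ (2 * max |a| |b|) ^ p :=
    pow_le_pow_left₀ (abs_nonneg _) h1 p
  have h3 : (2 * max |a| |b|) ^ p = 2 ^ p * (max |a| |b|) ^ p := mul_pow 2 _ p
  have h4 : (max |a| |b|) ^ p ≤ |a| ^ p + |b| ^ p := by
    rcases max_cases |a| |b| with ⟨he, _⟩ | ⟨he, _⟩ <;> rw [he] <;>
      nlinarith [pow_nonneg (abs_nonneg a) p, pow_nonneg (abs_nonneg b) p]
  have h5 : (0:ℝ) ≤ (2:ℝ) ^ p := by positivity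
  calc |a - b| ^ p ≤ 2 ^ p * (max |a| |b|) ^ p := by rw [← h3]; exact h2
    _ ≤ 2 ^ p * (|a| ^ p + |b| ^ p) := by nlinarith [h4]

lemma cross_le_aux {p : ℕ} (hp : 1 ≤ p) (a b : ℝ) (ha : 0 ≤ a) (hb : 0 ≤ b) :
    a ^ (p - 1) * b ≤ a ^ p + b ^ p := by
  have hps : p - 1 + 1 = p := Nat.succ_pred_eq_of_pos hp
  rcases le_total b a with hba | hab
  · have : a ^ (p - 1) * b ≤ a ^ (p - 1) * a :=
      mul_le_mul_of_nonneg_left hba (by positivity)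
    have h2 : a ^ (p - 1) * a = a ^ p := by rw [← pow_succ, hps]
    nlinarith [pow_nonneg hb p]
  · have h1 : a ^ (p - 1) ≤ b ^ (p - 1) := pow_le_pow_left₀ ha hab _
    have : a ^ (p - 1) * b ≤ b ^ (p - 1) * b :=
      mul_le_mul_of_nonneg_right h1 hb
    have h2 : b ^ (p - 1) * b = b ^ p := by rw [← pow_succ, hps]
    nlinarith [pow_nonneg ha p]

/-- If `h` satisfies the orthogonality condition for the `L_p` norm
(`p = 2ρ`, `ρ ≥ 1`), then `h` is an `L_p` optimal estimator of `X` from `Y = X + Z`. -/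
theorem orthogonality_implies_Lp_optimal
    {Ω : Type*} [MeasurableSpace Ω] (μ : Measure Ω) [IsProbabilityMeasure μ]
    (X Z : Ω → ℝ) (hXm : Measurable X) (hZm : Measurable Z)
    (hindep : IndepFun X Z μ)
    (hXint : Integrable X μ) (hZint : Integrable Z μ)
    (hXmean : ∫ ω, X ω ∂μ = 0) (hZmean : ∫ ω, Z ω ∂μ = 0)
    (hX2 : Integrable (fun ω => X ω ^ 2) μ) (hZ2 : Integrable (fun ω => Z ω ^ 2) μ)
    (hXvar : ∫ ω, X ω ^ 2 ∂μ ≠ 0) (hZvar : ∫ ω, Z ω ^ 2 ∂μ ≠ 0)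
    (ρ : ℕ) (hρ : 1 ≤ ρ) (p : ℕ) (hp : p = 2 * ρ)
    (hXp : Integrable (fun ω => |X ω| ^ p) μ)
    (hZp : Integrable (fun ω => |Z ω| ^ p) μ)
    (Y : Ω → ℝ) (hY : Y = fun ω => X ω + Z ω)
    (h : ℝ → ℝ) (hh : Measurable h)
    (hhp : Integrable (fun ω => |h (Y ω)| ^ p) μ)
    (horth : ∀ η : ℝ → ℝ, Measurable η →
      Integrable (fun ω => |X ω - h (Y ω)| ^ (p - 1) * |η (Y ω)|) μ →
      ∫ ω, (X ω - h (Y ω)) ^ (p - 1) * η (Y ω) ∂μ = 0) :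
    ∀ g : ℝ → ℝ, Measurable g →
      Integrable (fun ω => |X ω - g (Y ω)| ^ p) μ →
      ∫ ω, |X ω - h (Y ω)| ^ p ∂μ ≤ ∫ ω, |X ω - g (Y ω)| ^ p ∂μ := by
  intro g hg hgint
  have hpe : Even p := ⟨ρ, by omega⟩
  have hp1 : 1 ≤ p := by omega
  have hYm : Measurable Y := by rw [hY]; exact hXm.add hZm
  have hhYm : Measurable fun ω => h (Y ω) := hh.comp hYm
  have hgYm : Measurable fun ω => g (Y ω) := hg.comp hYm
  have hUm : Measurable fun ω => X ω - h (Y ω) := hXm.sub hhYm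
  have hVm : Measurable fun ω => h (Y ω) - g (Y ω) := hhYm.sub hgYm
  -- |X - h(Y)|^p is integrable
  have hUp : Integrable (fun ω => |X ω - h (Y ω)| ^ p) μ := by
    refine Integrable.mono ((hXp.add hhp).const_mul (2 ^ p))
      ((hUm.abs.pow_const p).aestronglyMeasurable) (ae_of_all _ fun ω => ?_)
    simp only [Pi.add_apply, Real.norm_eq_abs]
    rw [abs_of_nonneg (by positivity : (0:ℝ) ≤ |X ω - h (Y ω)| ^ p),
      abs_of_nonneg (by positivity : (0:ℝ) ≤ 2 ^ p * (|X ω| ^ p + |h (Y ω)| ^ p))]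
    exact abs_sub_pow_le_aux p (X ω) (h (Y ω))
  -- |g(Y)|^p is integrable
  have hgYp : Integrable (fun ω => |g (Y ω)| ^ p) μ := by
    refine Integrable.mono ((hgint.add hXp).const_mul (2 ^ p))
      ((hgYm.abs.pow_const p).aestronglyMeasurable) (ae_of_all _ fun ω => ?_)
    simp only [Pi.add_apply, Real.norm_eq_abs]
    rw [abs_of_nonneg (by positivity : (0:ℝ) ≤ |g (Y ω)| ^ p),
      abs_of_nonneg (by positivity : (0:ℝ) ≤ 2 ^ p * (|X ω - g (Y ω)| ^ p + |X ω| ^ p))]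
    have he : |g (Y ω)| = |X ω - g (Y ω) - X ω| := by
      rw [show X ω - g (Y ω) - X ω = -(g (Y ω)) by ring, abs_neg]
    rw [he]
    exact abs_sub_pow_le_aux p (X ω - g (Y ω)) (X ω)
  -- |V|^p is integrable
  have hVp : Integrable (fun ω => |h (Y ω) - g (Y ω)| ^ p) μ := by
    refine Integrable.mono ((hhp.add hgYp).const_mul (2 ^ p))
      ((hVm.abs.pow_const p).aestronglyMeasurable) (ae_of_all _ fun ω => ?_)
    simp only [Pi.add_apply, Real.norm_eq_abs]
    rw [abs_of_nonneg (by positivity : (0:ℝ) ≤ |h (Y ω) - g (Y ω)| ^ p),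
      abs_of_nonneg (by positivity : (0:ℝ) ≤ 2 ^ p * (|h (Y ω)| ^ p + |g (Y ω)| ^ p))]
    exact abs_sub_pow_le_aux p (h (Y ω)) (g (Y ω))
  -- the cross term |U|^(p-1) |V| is integrable
  have hcross : Integrable
      (fun ω => |X ω - h (Y ω)| ^ (p - 1) * |h (Y ω) - g (Y ω)|) μ := by
    refine Integrable.mono (hUp.add hVp)
      ((hUm.abs.pow_const (p - 1)).mul hVm.abs).aestronglyMeasurable
      (ae_of_all _ fun ω => ?_)
    simp only [Pi.add_apply, Real.norm_eq_abs]
    rw [abs_of_nonneg (by positivity :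
        (0:ℝ) ≤ |X ω - h (Y ω)| ^ (p - 1) * |h (Y ω) - g (Y ω)|),
      abs_of_nonneg (by positivity :
        (0:ℝ) ≤ |X ω - h (Y ω)| ^ p + |h (Y ω) - g (Y ω)| ^ p)]
    exact cross_le_aux hp1 _ _ (abs_nonneg _) (abs_nonneg _)
  -- the signed cross term is integrable
  have hcross2 : Integrable
      (fun ω => (X ω - h (Y ω)) ^ (p - 1) * (h (Y ω) - g (Y ω))) μ := by
    refine hcross.mono' ((hUm.pow_const (p - 1)).mul hVm).aestronglyMeasurable
      (ae_of_all _ fun ω => ?_)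
    rw [Real.norm_eq_abs, abs_mul, abs_pow]
  -- the orthogonality condition kills the cross term
  have hzero : ∫ ω, (X ω - h (Y ω)) ^ (p - 1) * (h (Y ω) - g (Y ω)) ∂μ = 0 := by
    have := horth (fun y => h y - g y) (hh.sub hg) hcross
    simpa using this
  -- pointwise tangent inequality
  have hpt : ∀ ω, (X ω - h (Y ω)) ^ p
      + p * ((X ω - h (Y ω)) ^ (p - 1) * (h (Y ω) - g (Y ω)))
      ≤ |X ω - g (Y ω)| ^ p := by
    intro ω
    have key := tangent_pow_aux hpe (X ω - h (Y ω)) (h (Y ω) - g (Y ω))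
    have he : X ω - h (Y ω) + (h (Y ω) - g (Y ω)) = X ω - g (Y ω) := by ring
    rw [he] at key
    rw [hpe.pow_abs]
    nlinarith [key]
  -- integrability of the lower bound
  have hUpInt : Integrable (fun ω => (X ω - h (Y ω)) ^ p) μ := by
    refine hUp.congr (ae_of_all _ fun ω => ?_)
    exact (hpe.pow_abs _)
  have hLB : Integrable (fun ω => (X ω - h (Y ω)) ^ p
      + p * ((X ω - h (Y ω)) ^ (p - 1) * (h (Y ω) - g (Y ω)))) μ :=
    hUpInt.add (hcross2.const_mul p)
  -- conclude
  calc ∫ ω, |X ω - h (Y ω)| ^ p ∂μ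
      = ∫ ω, (X ω - h (Y ω)) ^ p ∂μ := by
        refine integral_congr_ae (ae_of_all _ fun ω => ?_)
        simpa using hpe.pow_abs (X ω - h (Y ω))
    _ = ∫ ω, ((X ω - h (Y ω)) ^ p
          + p * ((X ω - h (Y ω)) ^ (p - 1) * (h (Y ω) - g (Y ω)))) ∂μ := by
        rw [integral_add hUpInt (hcross2.const_mul p), integral_const_mul, hzero]
        simp
    _ ≤ ∫ ω, |X ω - g (Y ω)| ^ p ∂μ :=
        integral_mono hLB hgint hpt
end

section
/- Let n ≥ 1 be a natural number and let Z, Z₁, …, Z_n be independent and identically distributed real random variables with zero mean and finite nonzero variance. Set X = Z₁ + ⋯ + Z_n (so X is independent of Z and the SNR is γ = Var(X)/Var(Z) = n). Then the MSE optimal estimator of X from Y = X + Z is linear: E[X | X + Z] = (n/(n+1))·(X + Z) almost surely. In particular, for every natural SNR γ ∈ ℕ a matching source distribution exists regardless of the noise distribution. -/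
set_option maxHeartbeats 1000000


open MeasureTheory ProbabilityTheory

/-- Corollary 1 of the paper: if `Z, Z₁, ..., Z_n` are i.i.d. with
zero mean and finite nonzero variance and `X = Z₁ + ⋯ + Z_n`, then the MSE optimal
estimator of `X` from `Y = X + Z` is linear: `E[X | X+Z] = (n/(n+1))·(X+Z)` a.s.
(Here `W 0` plays the role of `Z` and `W i.succ` the role of `Z_i`.) -/
theorem matching_source_exists_of_natural_snr
    {Ω : Type*} [MeasurableSpace Ω] (μ : Measure Ω) [IsProbabilityMeasure μ]
    (n : ℕ) (hn : 1 ≤ n) (W : Fin (n + 1) → Ω → ℝ)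
    (hWm : ∀ i, Measurable (W i))
    (hindep : iIndepFun W μ)
    (hident : ∀ i, IdentDistrib (W i) (W 0) μ μ)
    (hint : Integrable (W 0) μ) (hmean : ∫ ω, W 0 ω ∂μ = 0)
    (h2 : Integrable (fun ω => W 0 ω ^ 2) μ) (hvar : ∫ ω, W 0 ω ^ 2 ∂μ ≠ 0)
    (X Z : Ω → ℝ) (hZ : Z = W 0) (hX : X = fun ω => ∑ i : Fin n, W i.succ ω) :
    μ[X | MeasurableSpace.comap (fun ω => X ω + Z ω) inferInstance] =ᵐ[μ]
      fun ω => (n : ℝ) / ((n : ℝ) + 1) * (X ω + Z ω) := by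
  subst hZ hX
  set S : Ω → ℝ := fun ω => ∑ i : Fin (n + 1), W i ω with hSdef
  have hXZS : (fun ω => (∑ i : Fin n, W i.succ ω) + W 0 ω) = S := by
    funext ω; simp [hSdef, Fin.sum_univ_succ, add_comm]
  have hSm : Measurable S := by
    apply Finset.measurable_sum
    exact fun i _ => hWm i
  -- integrability facts
  have hWint : ∀ i, Integrable (W i) μ := fun i => (hident i).integrable_iff.mpr hint
  have hXint : Integrable (fun ω => ∑ i : Fin n, W i.succ ω) μ :=
    integrable_finset_sum _ fun i _ => hWint i.succ
  have hSint : Integrable S μ := integrable_finset_sum _ fun i _ => hWint i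
  -- joint law is a product measure
  set ν : Measure ℝ := Measure.map (W 0) μ with hν
  have : IsProbabilityMeasure ν := Measure.isProbabilityMeasure_map (hWm 0).aemeasurable
  set π : Measure (Fin (n + 1) → ℝ) := Measure.pi (fun _ => ν) with hπ
  set V : Ω → Fin (n + 1) → ℝ := fun ω i => W i ω with hV
  have hVm : Measurable V := measurable_pi_lambda _ hWm
  have hmap : Measure.map V μ = π := by
    refine (Measure.pi_eq fun s hs => ?_).symm
    rw [Measure.map_apply hVm (MeasurableSet.univ_pi hs)]
    have hpre : V ⁻¹' Set.pi Set.univ s = ⋂ i ∈ Finset.univ, W i ⁻¹' s i := by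
      ext ω; simp [hV, Set.mem_pi]
    rw [hpre, hindep.measure_inter_preimage_eq_mul Finset.univ (fun i _ => hs i)]
    refine Finset.prod_congr rfl fun i _ => ?_
    rw [← Measure.map_apply (hWm i) (hs i), (hident i).map_eq]
  -- key exchangeability step
  have key : ∀ (i : Fin (n + 1)) (B : Set ℝ), MeasurableSet B →
      ∫ ω in S ⁻¹' B, W i ω ∂μ = ∫ ω in S ⁻¹' B, W 0 ω ∂μ := by
    intro i B hB
    set F : Fin (n + 1) → (Fin (n + 1) → ℝ) → ℝ :=
      fun i x => Set.indicator B (fun _ => (1 : ℝ)) (∑ j, x j) * x i with hF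
    have hFm : ∀ i, Measurable (F i) := by
      intro i
      exact ((measurable_one.indicator hB).comp
        (Finset.measurable_sum _ fun j _ => measurable_pi_apply j)).mul (measurable_pi_apply i)
    have hconv : ∀ i, ∫ ω in S ⁻¹' B, W i ω ∂μ = ∫ x, F i x ∂π := by
      intro i
      rw [← hmap, integral_map hVm.aemeasurable (hFm i).aestronglyMeasurable,
        ← integral_indicator (hSm hB)]
      congr 1; funext ω
      by_cases h : S ω ∈ B <;>
        simp only [hSdef] at h <;> simp [hF, hV, Set.indicator_apply, h, hSdef]
    have hperm : ∫ x, F i x ∂π = ∫ x, F 0 x ∂π := by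
      classical
      set e : Fin (n + 1) ≃ Fin (n + 1) := Equiv.swap i 0 with he
      have mp : MeasurePreserving
          (MeasurableEquiv.piCongrLeft (fun _ : Fin (n + 1) => ℝ) e) π π :=
        measurePreserving_piCongrLeft (fun _ => ν) e
      rw [← mp.integral_comp (MeasurableEquiv.measurableEmbedding _) (F i)]
      congr 1; funext x
      have h1 : ∀ j, (MeasurableEquiv.piCongrLeft (fun _ : Fin (n + 1) => ℝ) e) x (e j) = x j :=
        fun j => MeasurableEquiv.piCongrLeft_apply_apply (β := fun _ : Fin (n + 1) => ℝ) e x j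
      set y := (MeasurableEquiv.piCongrLeft (fun _ : Fin (n + 1) => ℝ) e) x with hy
      have hsum : ∑ j, y j = ∑ j, x j := by
        rw [← Equiv.sum_comp e (fun j => y j)]
        exact Finset.sum_congr rfl fun j _ => h1 j
      have hi : y i = x 0 := by
        have := h1 0
        rwa [he, Equiv.swap_apply_right] at this
      simp [hF, hsum, hi]
    rw [hconv i, hconv 0, hperm]
  -- apply the characterization of conditional expectation
  have hXZ' : ∀ ω, (∑ i : Fin n, W i.succ ω) + W 0 ω = S ω := fun ω => congrFun hXZS ω
  simp only [hXZ']
  have hm : MeasurableSpace.comap S inferInstance ≤ ‹MeasurableSpace Ω› := hSm.comap_le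
  have : SigmaFinite (μ.trim hm) := by
    have : IsFiniteMeasure (μ.trim hm) := isFiniteMeasure_trim hm
    infer_instance
  have hn1 : ((n : ℝ) + 1) ≠ 0 := by positivity
  refine (ae_eq_condExp_of_forall_setIntegral_eq hm hXint ?_ ?_ ?_).symm
  · intro s _ _
    exact ((hSint.const_mul _).integrableOn)
  · rintro s ⟨B, hB, rfl⟩ _
    have hsum0 : ∫ ω in S ⁻¹' B, S ω ∂μ = ((n : ℝ) + 1) * ∫ ω in S ⁻¹' B, W 0 ω ∂μ := by
      have : ∫ ω in S ⁻¹' B, S ω ∂μ = ∑ i : Fin (n + 1), ∫ ω in S ⁻¹' B, W i ω ∂μ := by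
        exact integral_finset_sum _ fun i _ => (hWint i).integrableOn
      rw [this]
      rw [Finset.sum_congr rfl fun i _ => key i B hB]
      simp [mul_comm]
    have hsumX : ∫ ω in S ⁻¹' B, (∑ i : Fin n, W i.succ ω) ∂μ
        = (n : ℝ) * ∫ ω in S ⁻¹' B, W 0 ω ∂μ := by
      have : ∫ ω in S ⁻¹' B, (∑ i : Fin n, W i.succ ω) ∂μ
          = ∑ i : Fin n, ∫ ω in S ⁻¹' B, W i.succ ω ∂μ :=
        integral_finset_sum _ fun i _ => (hWint i.succ).integrableOn
      rw [this, Finset.sum_congr rfl fun i _ => key i.succ B hB]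
      simp [mul_comm]
    rw [integral_const_mul, hsum0, hsumX]
    field_simp
  · refine StronglyMeasurable.aestronglyMeasurable ?_
    have hSm' : Measurable[MeasurableSpace.comap S inferInstance] S :=
      measurable_iff_comap_le.mpr le_rfl
    exact (hSm'.const_mul _).stronglyMeasurable
end

section
/- Let X and Z be independent real random variables with zero mean and finite nonzero variances, γ = Var(X)/Var(Z), and suppose the MSE optimal estimator is linear: E[X | X + Z] = (γ/(γ+1))·(X + Z) almost surely. Let M ≥ 1 and suppose X and Z have finite absolute moments up to order M + 1. Then for every m with 1 ≤ m ≤ M the moment recursion holds: E[X^{m+1}] = γ·E[Z^{m+1}] + Σ_{i=0}^{m−1} A(γ, m, i)·E[Z^{i+1}]·E[X^{m−i}], where A(γ, m, i) = γ·binom(m, i) − binom(m, i+1). -/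
open MeasureTheory ProbabilityTheory

/-- if the MSE optimal estimator is linear,
`E[X | X+Z] = (γ/(γ+1))·(X+Z)` a.s. with `γ = Var(X)/Var(Z)`, and both `X` and `Z`
have finite absolute moments up to order `M+1`, then the moment recursion
`E[X^{m+1}] = γ E[Z^{m+1}] + Σ_{i=0}^{m-1} (γ C(m,i) - C(m,i+1)) E[Z^{i+1}] E[X^{m-i}]`
holds for `1 ≤ m ≤ M`. -/
theorem moment_recursion_of_linear_mse
    {Ω : Type*} [MeasurableSpace Ω] (μ : Measure Ω) [IsProbabilityMeasure μ]
    (X Z : Ω → ℝ) (hXm : Measurable X) (hZm : Measurable Z)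
    (hindep : IndepFun X Z μ)
    (hXint : Integrable X μ) (hZint : Integrable Z μ)
    (hXmean : ∫ ω, X ω ∂μ = 0) (hZmean : ∫ ω, Z ω ∂μ = 0)
    (hX2 : Integrable (fun ω => X ω ^ 2) μ) (hZ2 : Integrable (fun ω => Z ω ^ 2) μ)
    (hXvar : ∫ ω, X ω ^ 2 ∂μ ≠ 0) (hZvar : ∫ ω, Z ω ^ 2 ∂μ ≠ 0)
    (γ : ℝ) (hγ : γ = (∫ ω, X ω ^ 2 ∂μ) / (∫ ω, Z ω ^ 2 ∂μ))
    (hlin : μ[X | MeasurableSpace.comap (fun ω => X ω + Z ω) inferInstance] =ᵐ[μ]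
      fun ω => γ / (γ + 1) * (X ω + Z ω))
    (M : ℕ) (hM : 1 ≤ M)
    (hXmom : ∀ k ≤ M + 1, Integrable (fun ω => |X ω| ^ k) μ)
    (hZmom : ∀ k ≤ M + 1, Integrable (fun ω => |Z ω| ^ k) μ) :
    ∀ m, 1 ≤ m → m ≤ M →
      ∫ ω, X ω ^ (m + 1) ∂μ =
        γ * ∫ ω, Z ω ^ (m + 1) ∂μ +
          ∑ i ∈ Finset.range m,
            (γ * (m.choose i : ℝ) - (m.choose (i + 1) : ℝ)) *
              (∫ ω, Z ω ^ (i + 1) ∂μ) * (∫ ω, X ω ^ (m - i) ∂μ) := by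
  intro m hm1 hmM
  -- integrability of powers
  have hXp : ∀ k, k ≤ M + 1 → Integrable (fun ω => X ω ^ k) μ := by
    intro k hk
    refine (hXmom k hk).mono ((hXm.pow_const k).aestronglyMeasurable) ?_
    filter_upwards with ω
    simp [abs_pow]
  have hZp : ∀ k, k ≤ M + 1 → Integrable (fun ω => Z ω ^ k) μ := by
    intro k hk
    refine (hZmom k hk).mono ((hZm.pow_const k).aestronglyMeasurable) ?_
    filter_upwards with ω
    simp [abs_pow]
  -- independence of powers
  have hind : ∀ a b : ℕ, IndepFun (fun ω => X ω ^ a) (fun ω => Z ω ^ b) μ :=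
    fun a b => hindep.comp (measurable_id.pow_const a) (measurable_id.pow_const b)
  have hmulint : ∀ a b : ℕ,
      ∫ ω, X ω ^ a * Z ω ^ b ∂μ = (∫ ω, X ω ^ a ∂μ) * ∫ ω, Z ω ^ b ∂μ :=
    fun a b => (hind a b).integral_fun_mul_eq_mul_integral (hXm.pow_const a).aestronglyMeasurable
      (hZm.pow_const b).aestronglyMeasurable
  have hmuli : ∀ a b : ℕ, a ≤ M + 1 → b ≤ M + 1 →
      Integrable (fun ω => X ω ^ a * Z ω ^ b) μ :=
    fun a b ha hb => (hind a b).integrable_mul (hXp a ha) (hZp b hb)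
  -- binomial expansions
  have hXYpt : ∀ ω, X ω * (X ω + Z ω) ^ m =
      ∑ i ∈ Finset.range (m + 1), (m.choose i : ℝ) * (X ω ^ (i + 1) * Z ω ^ (m - i)) := by
    intro ω
    rw [add_pow, Finset.mul_sum]
    refine Finset.sum_congr rfl fun i hi => ?_
    ring
  have hZYpt : ∀ ω, Z ω * (X ω + Z ω) ^ m =
      ∑ i ∈ Finset.range (m + 1), (m.choose i : ℝ) * (X ω ^ i * Z ω ^ (m - i + 1)) := by
    intro ω
    rw [add_pow, Finset.mul_sum]
    refine Finset.sum_congr rfl fun i hi => ?_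
    ring
  have hib : ∀ i ∈ Finset.range (m + 1), i + 1 ≤ M + 1 ∧ m - i ≤ M + 1 ∧ i ≤ M + 1 ∧
      m - i + 1 ≤ M + 1 := by
    intro i hi
    rw [Finset.mem_range] at hi
    omega
  have hintXY : Integrable (fun ω => X ω * (X ω + Z ω) ^ m) μ := by
    have h : Integrable (fun ω => ∑ i ∈ Finset.range (m + 1),
        (m.choose i : ℝ) * (X ω ^ (i + 1) * Z ω ^ (m - i))) μ :=
      integrable_finset_sum _ fun i hi =>
        ((hmuli _ _ (hib i hi).1 (hib i hi).2.1).const_mul _)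
    exact h.congr (Filter.Eventually.of_forall fun ω => (hXYpt ω).symm)
  have hintZY : Integrable (fun ω => Z ω * (X ω + Z ω) ^ m) μ := by
    have h : Integrable (fun ω => ∑ i ∈ Finset.range (m + 1),
        (m.choose i : ℝ) * (X ω ^ i * Z ω ^ (m - i + 1))) μ :=
      integrable_finset_sum _ fun i hi =>
        ((hmuli _ _ (hib i hi).2.2.1 (hib i hi).2.2.2).const_mul _)
    exact h.congr (Filter.Eventually.of_forall fun ω => (hZYpt ω).symm)
  -- integral expansions
  have hXYint : ∫ ω, X ω * (X ω + Z ω) ^ m ∂μ =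
      ∑ i ∈ Finset.range (m + 1), (m.choose i : ℝ) *
        ((∫ ω, X ω ^ (i + 1) ∂μ) * ∫ ω, Z ω ^ (m - i) ∂μ) := by
    rw [integral_congr_ae (Filter.Eventually.of_forall hXYpt),
      integral_finset_sum _ fun i hi =>
        ((hmuli _ _ (hib i hi).1 (hib i hi).2.1).const_mul _)]
    refine Finset.sum_congr rfl fun i hi => ?_
    rw [integral_const_mul, hmulint]
  have hZYint : ∫ ω, Z ω * (X ω + Z ω) ^ m ∂μ =
      ∑ i ∈ Finset.range (m + 1), (m.choose i : ℝ) *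
        ((∫ ω, X ω ^ i ∂μ) * ∫ ω, Z ω ^ (m - i + 1) ∂μ) := by
    rw [integral_congr_ae (Filter.Eventually.of_forall hZYpt),
      integral_finset_sum _ fun i hi =>
        ((hmuli _ _ (hib i hi).2.2.1 (hib i hi).2.2.2).const_mul _)]
    refine Finset.sum_congr rfl fun i hi => ?_
    rw [integral_const_mul, hmulint]
  -- γ is positive
  have hX2nonneg : 0 ≤ ∫ ω, X ω ^ 2 ∂μ := integral_nonneg fun ω => sq_nonneg _
  have hZ2nonneg : 0 ≤ ∫ ω, Z ω ^ 2 ∂μ := integral_nonneg fun ω => sq_nonneg _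
  have hγpos : 0 < γ := by
    rw [hγ]
    exact div_pos (lt_of_le_of_ne hX2nonneg (Ne.symm hXvar))
      (lt_of_le_of_ne hZ2nonneg (Ne.symm hZvar))
  have hγ1 : γ + 1 ≠ 0 := by positivity
  -- conditional expectation step : ∫ X·Y^m = γ/(γ+1) ∫ (X+Z)·Y^m
  have hmle : MeasurableSpace.comap (fun ω => X ω + Z ω) inferInstance ≤
      ‹MeasurableSpace Ω› := (hXm.add hZm).comap_le
  haveI : SigmaFinite (μ.trim hmle) := inferInstance
  have key : ∫ ω, X ω * (X ω + Z ω) ^ m ∂μ =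
      γ / (γ + 1) * ∫ ω, (X ω + Z ω) * (X ω + Z ω) ^ m ∂μ := by
    have hYmeas : Measurable[MeasurableSpace.comap (fun ω => X ω + Z ω) inferInstance]
        (fun ω => X ω + Z ω) := measurable_iff_comap_le.mpr le_rfl
    have hsm : StronglyMeasurable[MeasurableSpace.comap (fun ω => X ω + Z ω) inferInstance]
        (fun ω => (X ω + Z ω) ^ m) := (hYmeas.pow_const m).stronglyMeasurable
    have hprod : Integrable ((fun ω => (X ω + Z ω) ^ m) * X) μ := by
      refine hintXY.congr (Filter.Eventually.of_forall fun ω => ?_)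
      simp [mul_comm]
    have h1 := condExp_mul_of_stronglyMeasurable_left (μ := μ) hsm hprod hXint
    have h2 : (fun ω => (X ω + Z ω) ^ m) *
        μ[X | MeasurableSpace.comap (fun ω => X ω + Z ω) inferInstance] =ᵐ[μ]
        fun ω => (X ω + Z ω) ^ m * (γ / (γ + 1) * (X ω + Z ω)) := by
      filter_upwards [hlin] with ω hω
      simp [hω]
    calc ∫ ω, X ω * (X ω + Z ω) ^ m ∂μ
        = ∫ ω, ((fun ω => (X ω + Z ω) ^ m) * X) ω ∂μ := by
          refine integral_congr_ae (Filter.Eventually.of_forall fun ω => ?_)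
          simp [mul_comm]
      _ = ∫ ω, (μ[(fun ω => (X ω + Z ω) ^ m) * X |
            MeasurableSpace.comap (fun ω => X ω + Z ω) inferInstance]) ω ∂μ :=
          (integral_condExp hmle).symm
      _ = ∫ ω, (X ω + Z ω) ^ m * (γ / (γ + 1) * (X ω + Z ω)) ∂μ :=
          integral_congr_ae (h1.trans h2)
      _ = γ / (γ + 1) * ∫ ω, (X ω + Z ω) * (X ω + Z ω) ^ m ∂μ := by
          rw [← integral_const_mul]
          refine integral_congr_ae (Filter.Eventually.of_forall fun ω => ?_)
          ring
  -- deduce ∫ X·Y^m = γ ∫ Z·Y^m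
  have hsplit : ∫ ω, (X ω + Z ω) * (X ω + Z ω) ^ m ∂μ =
      (∫ ω, X ω * (X ω + Z ω) ^ m ∂μ) + ∫ ω, Z ω * (X ω + Z ω) ^ m ∂μ := by
    rw [← integral_add hintXY hintZY]
    refine integral_congr_ae (Filter.Eventually.of_forall fun ω => ?_)
    ring
  have hPQ : ∫ ω, X ω * (X ω + Z ω) ^ m ∂μ = γ * ∫ ω, Z ω * (X ω + Z ω) ^ m ∂μ := by
    have h := key
    rw [hsplit] at h
    field_simp at h
    linarith
  -- moments of order 0
  have hX0 : ∫ ω, X ω ^ 0 ∂μ = 1 := by simp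
  have hZ0 : ∫ ω, Z ω ^ 0 ∂μ = 1 := by simp
  -- assemble
  rw [hXYint, hZYint] at hPQ
  rw [Finset.sum_range_succ, Nat.sub_self, hZ0, Nat.choose_self] at hPQ
  rw [Finset.sum_range_succ', hX0, Nat.choose_zero_right, Nat.sub_zero] at hPQ
  simp only [Nat.cast_one, one_mul, mul_one] at hPQ
  have hsum_eq : ∑ i ∈ Finset.range m, (m.choose i : ℝ) *
        ((∫ ω, X ω ^ (i + 1) ∂μ) * ∫ ω, Z ω ^ (m - i) ∂μ)
      = ∑ i ∈ Finset.range m, (m.choose i : ℝ) *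
        ((∫ ω, X ω ^ (i + 1) ∂μ) * ∫ ω, Z ω ^ (m - (i + 1) + 1) ∂μ) := by
    refine Finset.sum_congr rfl fun i hi => ?_
    rw [Finset.mem_range] at hi
    have e : m - i = m - (i + 1) + 1 := by omega
    rw [e]
  rw [hsum_eq, mul_add, Finset.mul_sum] at hPQ
  have hcomb : ∑ i ∈ Finset.range m,
        (γ * (m.choose (i + 1) : ℝ) - (m.choose i : ℝ)) *
          ((∫ ω, X ω ^ (i + 1) ∂μ) * ∫ ω, Z ω ^ (m - (i + 1) + 1) ∂μ)
      = (∑ i ∈ Finset.range m, γ * ((m.choose (i + 1) : ℝ) *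
          ((∫ ω, X ω ^ (i + 1) ∂μ) * ∫ ω, Z ω ^ (m - (i + 1) + 1) ∂μ)))
        - ∑ i ∈ Finset.range m, (m.choose i : ℝ) *
          ((∫ ω, X ω ^ (i + 1) ∂μ) * ∫ ω, Z ω ^ (m - (i + 1) + 1) ∂μ) := by
    rw [← Finset.sum_sub_distrib]
    exact Finset.sum_congr rfl fun i hi => by ring
  have hstep : ∫ ω, X ω ^ (m + 1) ∂μ = γ * ∫ ω, Z ω ^ (m + 1) ∂μ +
      ∑ i ∈ Finset.range m, (γ * (m.choose (i + 1) : ℝ) - (m.choose i : ℝ)) *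
        ((∫ ω, X ω ^ (i + 1) ∂μ) * ∫ ω, Z ω ^ (m - (i + 1) + 1) ∂μ) := by
    rw [hcomb]
    linarith [hPQ]
  -- reindex the sum by reflection
  rw [hstep]
  congr 1
  conv_rhs => rw [← Finset.sum_range_reflect]
  refine Finset.sum_congr rfl fun j hj => ?_
  rw [Finset.mem_range] at hj
  have e1 : m - 1 - j + 1 = m - j := by omega
  have e3 : m - (m - 1 - j) = j + 1 := by omega
  have e6 : m - (j + 1) + 1 = m - j := by omega
  have e4 : m.choose (m - 1 - j) = m.choose (j + 1) := by
    have h : m - 1 - j = m - (j + 1) := by omega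
    rw [h, Nat.choose_symm (by omega)]
  have e5 : m.choose (m - j) = m.choose j := Nat.choose_symm (by omega)
  rw [e4, e1, e5, e3, e6]
  ring
end

section
/- Let p = 2ρ for a natural number ρ ≥ 1, and let X and Z be independent and identically distributed real random variables with E[|X|^p] < ∞. Then the estimator h(Y) = (1/2)·Y is L_p optimal: for every Borel measurable g : ℝ → ℝ with E[|X − g(Y)|^p] < ∞, one has E[|X − (1/2)(X + Z)|^p] ≤ E[|X − g(X + Z)|^p], where Y = X + Z. -/
open MeasureTheory ProbabilityTheory

lemma midpoint_abs_pow_le {p : ℕ} (hp : Even p) (u v : ℝ) :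
    |(u + v) / 2| ^ p ≤ (|u| ^ p + |v| ^ p) / 2 := by
  have hconv := (Even.convexOn_pow hp).2 (Set.mem_univ u) (Set.mem_univ v)
    (by norm_num : (0:ℝ) ≤ 1/2) (by norm_num : (0:ℝ) ≤ 1/2) (by norm_num)
  rw [hp.pow_abs, hp.pow_abs, hp.pow_abs]
  simp only [smul_eq_mul] at hconv
  rw [show (u + v) / 2 = (1/2:ℝ) * u + (1/2:ℝ) * v from by ring]
  linarith

/-- Theorem 3 of the paper, `L_p` case: if `X` and `Z` are
independent and identically distributed with `E[|X|^p] < ∞` for `p = 2ρ` (`ρ ≥ 1`),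
then `h(Y) = (1/2)Y` is `L_p` optimal for estimating `X` from `Y = X + Z`. -/
theorem half_linear_Lp_optimal_of_iid
    {Ω : Type*} [MeasurableSpace Ω] (μ : Measure Ω) [IsProbabilityMeasure μ]
    (X Z : Ω → ℝ) (hXm : Measurable X) (hZm : Measurable Z)
    (hindep : IndepFun X Z μ)
    (hident : Measure.map X μ = Measure.map Z μ)
    (ρ : ℕ) (hρ : 1 ≤ ρ) (p : ℕ) (hp : p = 2 * ρ)
    (hXp : Integrable (fun ω => |X ω| ^ p) μ) :
    ∀ g : ℝ → ℝ, Measurable g →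
      Integrable (fun ω => |X ω - g (X ω + Z ω)| ^ p) μ →
      ∫ ω, |X ω - (1 / 2 : ℝ) * (X ω + Z ω)| ^ p ∂μ ≤
        ∫ ω, |X ω - g (X ω + Z ω)| ^ p ∂μ := by
  intro g hg hInt
  have hev : Even p := ⟨ρ, by omega⟩
  -- joint distributions of (X,Z) and (Z,X) agree
  have hmap : μ.map (fun ω => (X ω, Z ω)) = μ.map (fun ω => (Z ω, X ω)) := by
    rw [(indepFun_iff_map_prod_eq_prod_map_map hXm.aemeasurable hZm.aemeasurable).mp hindep,
      (indepFun_iff_map_prod_eq_prod_map_map hZm.aemeasurable hXm.aemeasurable).mp hindep.symm,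
      hident]
  set F : ℝ × ℝ → ℝ := fun q => |q.1 - g (q.1 + q.2)| ^ p with hF
  have hFm : Measurable F := by
    apply Measurable.pow _ measurable_const
    exact (measurable_fst.sub (hg.comp (measurable_fst.add measurable_snd))).abs
  have hXZ : Measurable (fun ω => (X ω, Z ω)) := hXm.prodMk hZm
  have hZX : Measurable (fun ω => (Z ω, X ω)) := hZm.prodMk hXm
  -- transfer integrability and integral by the symmetry of joint law
  have hInt' : Integrable (fun ω => F (Z ω, X ω)) μ := by
    have h1 : Integrable F (μ.map (fun ω => (X ω, Z ω))) :=
      (integrable_map_measure hFm.aestronglyMeasurable hXZ.aemeasurable).mpr hInt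
    rw [hmap] at h1
    exact (integrable_map_measure hFm.aestronglyMeasurable hZX.aemeasurable).mp h1
  have hIntEq : ∫ ω, F (Z ω, X ω) ∂μ = ∫ ω, F (X ω, Z ω) ∂μ := by
    rw [← integral_map hZX.aemeasurable hFm.aestronglyMeasurable, ← hmap,
      integral_map hXZ.aemeasurable hFm.aestronglyMeasurable]
  -- pointwise bound
  have hpt : ∀ ω, |X ω - (1 / 2 : ℝ) * (X ω + Z ω)| ^ p ≤
      (F (X ω, Z ω) + F (Z ω, X ω)) / 2 := by
    intro ω
    have key := midpoint_abs_pow_le hev (X ω - g (X ω + Z ω)) (g (Z ω + X ω) - Z ω)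
    have h1 : X ω - (1 / 2 : ℝ) * (X ω + Z ω)
        = ((X ω - g (X ω + Z ω)) + (g (Z ω + X ω) - Z ω)) / 2 := by
      rw [add_comm (Z ω) (X ω)]; ring
    rw [h1]
    simpa [F, abs_sub_comm] using key
  have hRHSInt : Integrable (fun ω => (F (X ω, Z ω) + F (Z ω, X ω)) / 2) μ :=
    (hInt.add hInt').div_const 2
  calc ∫ ω, |X ω - (1 / 2 : ℝ) * (X ω + Z ω)| ^ p ∂μ
      ≤ ∫ ω, (F (X ω, Z ω) + F (Z ω, X ω)) / 2 ∂μ := by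
        refine integral_mono_of_nonneg (Filter.Eventually.of_forall fun ω => ?_) hRHSInt
          (Filter.Eventually.of_forall hpt)
        positivity
    _ = ∫ ω, F (X ω, Z ω) ∂μ := by
        rw [integral_div, integral_add hInt hInt', hIntEq]; ring
    _ = ∫ ω, |X ω - g (X ω + Z ω)| ^ p ∂μ := rfl
end

section
/- Let X and Z be independent Gaussian random variables, X ~ N(0, σ_x²) and Z ~ N(0, σ_z²) with σ_x², σ_z² > 0, let Y = X + Z, γ = σ_x²/σ_z², and k = γ/(γ+1) = σ_x²/(σ_x² + σ_z²). Then the estimation error X − kY is independent of Y, and consequently for every even natural number p = 2ρ (ρ ≥ 1) the linear estimator kY is L_p optimal: E[|X − kY|^p] ≤ E[|X − g(Y)|^p] for every Borel measurable g : ℝ → ℝ with E[|X − g(Y)|^p] < ∞. -/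
open MeasureTheory ProbabilityTheory

open scoped ENNReal

section Aux

lemma aux_prodWD (f g : ℝ → ℝ≥0∞) (hf : Measurable f) (hg : Measurable g)
    (hf1 : ∫⁻ x, f x ≠ ∞) (hg1 : ∫⁻ x, g x ≠ ∞) :
    (volume.withDensity f).prod (volume.withDensity g)
      = ((volume : Measure ℝ).prod volume).withDensity (fun p => f p.1 * g p.2) := by
  have h1 : IsFiniteMeasure (volume.withDensity f) := isFiniteMeasure_withDensity hf1
  have h2 : IsFiniteMeasure (volume.withDensity g) := isFiniteMeasure_withDensity hg1
  refine (Measure.prod_eq (μ := volume.withDensity f) (ν := volume.withDensity g)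
    fun s t hs ht => ?_)
  rw [withDensity_apply _ (hs.prod ht), ← Measure.prod_restrict,
    lintegral_prod_mul hf.aemeasurable hg.aemeasurable,
    withDensity_apply _ hs, withDensity_apply _ ht]

lemma aux_mapWD {e : (ℝ × ℝ) ≃ᵐ (ℝ × ℝ)}
    (hp : MeasurePreserving e (volume.prod volume) (volume.prod volume))
    (f : ℝ × ℝ → ℝ≥0∞) (hf : Measurable f) :
    Measure.map e (((volume : Measure ℝ).prod volume).withDensity f)
      = ((volume : Measure ℝ).prod volume).withDensity (f ∘ e.symm) := by
  ext s hs
  rw [Measure.map_apply e.measurable hs, withDensity_apply _ (e.measurable hs),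
    withDensity_apply _ hs]
  have : ∫⁻ p in s, (f ∘ e.symm) p ∂(volume.prod volume)
      = ∫⁻ p in s, (f ∘ e.symm) p ∂(Measure.map e (volume.prod volume)) := by rw [hp.map_eq]
  rw [this, setLIntegral_map hs (hf.comp e.symm.measurable) e.measurable]
  simp

noncomputable def auxTequiv (k : ℝ) : (ℝ × ℝ) ≃ᵐ (ℝ × ℝ) where
  toFun := fun p => (p.1 - k * (p.1 + p.2), p.1 + p.2)
  invFun := fun q => (q.1 + k * q.2, q.2 - q.1 - k * q.2)
  left_inv := fun p => by simp
  right_inv := fun q => by simp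
  measurable_toFun := by dsimp; fun_prop
  measurable_invFun := by dsimp; fun_prop

lemma aux_mpT (k : ℝ) : MeasurePreserving (auxTequiv k)
    ((volume : Measure ℝ).prod volume) (volume.prod volume) := by
  have mp1 : MeasurePreserving (fun p : ℝ × ℝ => (p.1, p.1 + p.2))
      (volume.prod volume) (volume.prod volume) :=
    (MeasurePreserving.id volume).skew_product (g := fun x y => x + y)
      (measurable_fst.add measurable_snd)
      (Filter.Eventually.of_forall fun x => map_add_left_eq_self volume x)
  have mpS : MeasurePreserving (fun p : ℝ × ℝ => (p.1, -(k * p.1) + p.2))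
      (volume.prod volume) (volume.prod volume) :=
    (MeasurePreserving.id volume).skew_product (g := fun x y => -(k * x) + y)
      ((measurable_fst.const_mul k).neg.add measurable_snd)
      (Filter.Eventually.of_forall fun x => map_add_left_eq_self volume _)
  have mp2 : MeasurePreserving (fun q : ℝ × ℝ => (q.1 - k * q.2, q.2))
      (volume.prod volume) (volume.prod volume) := by
    have he : (fun q : ℝ × ℝ => (q.1 - k * q.2, q.2))
        = Prod.swap ∘ (fun p : ℝ × ℝ => (p.1, -(k * p.1) + p.2)) ∘ Prod.swap := by
      funext q; simp [Prod.swap]; ring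
    rw [he]
    exact Measure.measurePreserving_swap.comp (mpS.comp Measure.measurePreserving_swap)
  have he : ⇑(auxTequiv k) = (fun q : ℝ × ℝ => (q.1 - k * q.2, q.2))
      ∘ (fun p : ℝ × ℝ => (p.1, p.1 + p.2)) := by
    funext p; simp [auxTequiv]
  rw [he]
  exact mp2.comp mp1

lemma aux_gauss_neg (v : NNReal) :
    Measure.map (fun x : ℝ => -x) (gaussianReal 0 v) = gaussianReal 0 v := by
  have := gaussianReal_map_const_mul (μ := 0) (v := v) (-1)
  simp only [neg_one_mul, mul_zero, neg_zero] at this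
  rw [this]
  congr 1
  ext : 1
  simp

open Real in
lemma aux_pdfid (vx vz : NNReal) (hx : 0 < vx) (hz : 0 < vz) (u y : ℝ) :
    gaussianPDFReal 0 vx (u + ((vx:ℝ)/((vx:ℝ)+(vz:ℝ)))*y)
      * gaussianPDFReal 0 vz (y - u - ((vx:ℝ)/((vx:ℝ)+(vz:ℝ)))*y)
    = gaussianPDFReal 0 (vx*vz/(vx+vz)) u * gaussianPDFReal 0 (vx+vz) y := by
  have hx' : (0:ℝ) < vx := hx
  have hz' : (0:ℝ) < vz := hz
  have hs : (0:ℝ) < (vx:ℝ) + (vz:ℝ) := by linarith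
  simp only [gaussianPDFReal, sub_zero]
  rw [mul_mul_mul_comm, mul_mul_mul_comm ((Real.sqrt (2*π*(vx*vz/(vx+vz) : NNReal)))⁻¹),
    ← Real.exp_add, ← Real.exp_add]
  have hπ : (0:ℝ) < 2 * π := by positivity
  congr 1
  · rw [← mul_inv, ← mul_inv, ← Real.sqrt_mul (by positivity), ← Real.sqrt_mul (by positivity)]
    congr 2
    push_cast
    field_simp
  · congr 1
    push_cast
    field_simp
    ring

lemma aux_mapgauss (vx vz : NNReal) (hx : 0 < vx) (hz : 0 < vz) (k : ℝ)
    (hk : k = (vx : ℝ) / ((vx : ℝ) + (vz : ℝ))) :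
    Measure.map (auxTequiv k) ((gaussianReal 0 vx).prod (gaussianReal 0 vz))
      = (gaussianReal 0 (vx*vz/(vx+vz))).prod (gaussianReal 0 (vx+vz)) := by
  have hsum : vx + vz ≠ 0 := by positivity
  have hvw : vx * vz / (vx + vz) ≠ 0 := by positivity
  rw [gaussianReal_of_var_ne_zero _ hx.ne', gaussianReal_of_var_ne_zero _ hz.ne',
    gaussianReal_of_var_ne_zero _ hvw, gaussianReal_of_var_ne_zero _ hsum,
    aux_prodWD _ _ (measurable_gaussianPDF _ _) (measurable_gaussianPDF _ _)
      (by rw [lintegral_gaussianPDF_eq_one _ hx.ne']; exact ENNReal.one_ne_top)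
      (by rw [lintegral_gaussianPDF_eq_one _ hz.ne']; exact ENNReal.one_ne_top),
    aux_prodWD _ _ (measurable_gaussianPDF _ _) (measurable_gaussianPDF _ _)
      (by rw [lintegral_gaussianPDF_eq_one _ hvw]; exact ENNReal.one_ne_top)
      (by rw [lintegral_gaussianPDF_eq_one _ hsum]; exact ENNReal.one_ne_top),
    aux_mapWD (aux_mpT k) _
      (show Measurable fun p : ℝ × ℝ => gaussianPDF 0 vx p.1 * gaussianPDF 0 vz p.2 from
        ((measurable_gaussianPDF 0 vx).comp measurable_fst).mul
          ((measurable_gaussianPDF 0 vz).comp measurable_snd))]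
  congr 1
  funext q
  have hsymm : (auxTequiv k).symm q = (q.1 + k * q.2, q.2 - q.1 - k * q.2) := rfl
  simp only [Function.comp_apply, hsymm]
  simp only [gaussianPDF,
    ← ENNReal.ofReal_mul (gaussianPDFReal_nonneg _ _ _),
    ← ENNReal.ofReal_mul (gaussianPDFReal_nonneg _ _ _)]
  rw [hk]
  rw [aux_pdfid vx vz hx hz q.1 q.2]

end Aux

/-- for independent Gaussians `X ∼ N(0, σ_x²)`, `Z ∼ N(0, σ_z²)` and
`k = σ_x²/(σ_x² + σ_z²)`, the estimation error `X - kY` is independent of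
`Y = X + Z`, and consequently for every even `p = 2ρ` (`ρ ≥ 1`) the linear
estimator `kY` is `L_p` optimal. -/
theorem gaussian_linear_estimator_error_indep_and_Lp_optimal
    {Ω : Type*} [MeasurableSpace Ω] (μ : Measure Ω) [IsProbabilityMeasure μ]
    (X Z : Ω → ℝ) (hXm : Measurable X) (hZm : Measurable Z)
    (hindep : IndepFun X Z μ)
    (vx vz : NNReal) (hvxpos : 0 < vx) (hvzpos : 0 < vz)
    (hlawX : Measure.map X μ = gaussianReal 0 vx)
    (hlawZ : Measure.map Z μ = gaussianReal 0 vz)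
    (k : ℝ) (hk : k = (vx : ℝ) / ((vx : ℝ) + (vz : ℝ))) :
    IndepFun (fun ω => X ω - k * (X ω + Z ω)) (fun ω => X ω + Z ω) μ ∧
    ∀ ρ : ℕ, 1 ≤ ρ → ∀ g : ℝ → ℝ, Measurable g →
      Integrable (fun ω => |X ω - g (X ω + Z ω)| ^ (2 * ρ)) μ →
      ∫ ω, |X ω - k * (X ω + Z ω)| ^ (2 * ρ) ∂μ ≤
        ∫ ω, |X ω - g (X ω + Z ω)| ^ (2 * ρ) ∂μ := by
  set W : Ω → ℝ := fun ω => X ω - k * (X ω + Z ω) with hW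
  set Y : Ω → ℝ := fun ω => X ω + Z ω with hY
  set vw : NNReal := vx * vz / (vx + vz) with hvw
  set vy : NNReal := vx + vz with hvy
  have hWm : Measurable W := hXm.sub ((hXm.add hZm).const_mul k)
  have hYm : Measurable Y := hXm.add hZm
  have hpairXZ : Measure.map (fun ω => (X ω, Z ω)) μ
      = (gaussianReal 0 vx).prod (gaussianReal 0 vz) := by
    rw [← hlawX, ← hlawZ]
    exact (indepFun_iff_map_prod_eq_prod_map_map hXm.aemeasurable hZm.aemeasurable).mp hindep
  have hcomp : (fun ω => (W ω, Y ω)) = (auxTequiv k) ∘ (fun ω => (X ω, Z ω)) := by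
    funext ω; simp [auxTequiv, hW, hY]
  have hpairWY : Measure.map (fun ω => (W ω, Y ω)) μ
      = (gaussianReal 0 vw).prod (gaussianReal 0 vy) := by
    rw [hcomp, ← Measure.map_map (auxTequiv k).measurable (hXm.prodMk hZm), hpairXZ,
      aux_mapgauss vx vz hvxpos hvzpos k hk]
  have hlawW : Measure.map W μ = gaussianReal 0 vw := by
    have : Measure.map W μ = Measure.map Prod.fst (Measure.map (fun ω => (W ω, Y ω)) μ) := by
      rw [Measure.map_map measurable_fst (hWm.prodMk hYm)]
      rfl
    rw [this, hpairWY, Measure.map_fst_prod]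
    simp
  have hlawY : Measure.map Y μ = gaussianReal 0 vy := by
    have : Measure.map Y μ = Measure.map Prod.snd (Measure.map (fun ω => (W ω, Y ω)) μ) := by
      rw [Measure.map_map measurable_snd (hWm.prodMk hYm)]
      rfl
    rw [this, hpairWY, Measure.map_snd_prod]
    simp
  have hindepWY : IndepFun W Y μ := by
    rw [indepFun_iff_map_prod_eq_prod_map_map hWm.aemeasurable hYm.aemeasurable,
      hpairWY, hlawW, hlawY]
  refine ⟨hindepWY, ?_⟩
  intro ρ hρ g hgm hint
  set p : ℕ := 2 * ρ with hp
  set ν : Measure ℝ := gaussianReal 0 vw with hν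
  set νy : Measure ℝ := gaussianReal 0 vy with hνy
  -- key one-dimensional estimate
  have habs : ∀ x : ℝ, |x| ^ p = x ^ p := by
    intro x
    rw [hp]
    exact Even.pow_abs (even_two_mul ρ) x
  have hptwise : ∀ (c w : ℝ), 2 * |w| ^ p ≤ |w - c| ^ p + |w + c| ^ p := by
    intro c w
    have hcvx := Even.convexOn_pow (𝕜 := ℝ) (even_two_mul ρ)
    have h2 := hcvx.2 (Set.mem_univ (w - c)) (Set.mem_univ (w + c))
      (by norm_num : (0:ℝ) ≤ 1/2) (by norm_num : (0:ℝ) ≤ 1/2) (by norm_num)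
    simp only [smul_eq_mul] at h2
    have he : (1/2 : ℝ) * (w - c) + (1/2) * (w + c) = w := by ring
    rw [he] at h2
    rw [habs, habs, habs]
    linarith
  have hI : ∀ c : ℝ, (∫⁻ w, ENNReal.ofReal (|w| ^ p) ∂ν)
      ≤ ∫⁻ w, ENNReal.ofReal (|w - c| ^ p) ∂ν := by
    intro c
    have hmc : Measurable fun w : ℝ => ENNReal.ofReal (|w - c| ^ p) :=
      (((measurable_id.sub_const c).abs.pow_const p)).ennreal_ofReal
    have hpc : Measurable fun w : ℝ => ENNReal.ofReal (|w + c| ^ p) :=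
      (((measurable_id.add_const c).abs.pow_const p)).ennreal_ofReal
    have hneg : ∫⁻ w, ENNReal.ofReal (|w + c| ^ p) ∂ν
        = ∫⁻ w, ENNReal.ofReal (|w - c| ^ p) ∂ν := by
      conv_lhs => rw [hν, ← aux_gauss_neg vw, lintegral_map hpc measurable_neg]
      refine lintegral_congr fun w => ?_
      rw [neg_add_eq_sub, abs_sub_comm]
    have hmain : 2 * ∫⁻ w, ENNReal.ofReal (|w| ^ p) ∂ν
        ≤ 2 * ∫⁻ w, ENNReal.ofReal (|w - c| ^ p) ∂ν := by
      calc 2 * ∫⁻ w, ENNReal.ofReal (|w| ^ p) ∂ν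
          = ∫⁻ w, ENNReal.ofReal (2 * |w| ^ p) ∂ν := by
            rw [← lintegral_const_mul 2 (measurable_abs.pow_const p).ennreal_ofReal]
            refine lintegral_congr fun w => ?_
            rw [ENNReal.ofReal_mul (by norm_num)]
            norm_num
        _ ≤ ∫⁻ w, (ENNReal.ofReal (|w - c| ^ p) + ENNReal.ofReal (|w + c| ^ p)) ∂ν := by
            refine lintegral_mono fun w => ?_
            rw [← ENNReal.ofReal_add (by positivity) (by positivity)]
            exact ENNReal.ofReal_le_ofReal (hptwise c w)
        _ = (∫⁻ w, ENNReal.ofReal (|w - c| ^ p) ∂ν)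
            + ∫⁻ w, ENNReal.ofReal (|w + c| ^ p) ∂ν := lintegral_add_left hmc _
        _ = 2 * ∫⁻ w, ENNReal.ofReal (|w - c| ^ p) ∂ν := by rw [hneg, two_mul]
    exact (ENNReal.mul_le_mul_iff_right two_ne_zero ENNReal.ofNat_ne_top).mp hmain
  -- transfer to Ω
  set f : ℝ → ℝ := fun y => g y - k * y with hf
  have hfm : Measurable f := hgm.sub (measurable_id.const_mul k)
  have hXg : ∀ ω, X ω - g (Y ω) = W ω - f (Y ω) := by
    intro ω; simp only [hW, hY, hf]; ring
  have hmWf : Measurable fun q : ℝ × ℝ => ENNReal.ofReal (|q.1 - f q.2| ^ p) :=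
    ((measurable_fst.sub (hfm.comp measurable_snd)).abs.pow_const p).ennreal_ofReal
  have hB : ∫⁻ ω, ENNReal.ofReal (|X ω - g (Y ω)| ^ p) ∂μ
      = ∫⁻ y, ∫⁻ w, ENNReal.ofReal (|w - f y| ^ p) ∂ν ∂νy := by
    calc ∫⁻ ω, ENNReal.ofReal (|X ω - g (Y ω)| ^ p) ∂μ
        = ∫⁻ ω, ENNReal.ofReal (|W ω - f (Y ω)| ^ p) ∂μ := by
          refine lintegral_congr fun ω => by rw [hXg]
      _ = ∫⁻ q, ENNReal.ofReal (|q.1 - f q.2| ^ p) ∂(Measure.map (fun ω => (W ω, Y ω)) μ) := by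
          rw [lintegral_map hmWf (hWm.prodMk hYm)]
      _ = ∫⁻ q, ENNReal.ofReal (|q.1 - f q.2| ^ p) ∂(ν.prod νy) := by rw [hpairWY]
      _ = ∫⁻ y, ∫⁻ w, ENNReal.ofReal (|w - f y| ^ p) ∂ν ∂νy :=
          lintegral_prod_symm _ hmWf.aemeasurable
  have hA : ∫⁻ ω, ENNReal.ofReal (|W ω| ^ p) ∂μ = ∫⁻ w, ENNReal.ofReal (|w| ^ p) ∂ν := by
    rw [← hlawW, lintegral_map (measurable_abs.pow_const p).ennreal_ofReal hWm]
  have hAB : ∫⁻ ω, ENNReal.ofReal (|W ω| ^ p) ∂μ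
      ≤ ∫⁻ ω, ENNReal.ofReal (|X ω - g (Y ω)| ^ p) ∂μ := by
    rw [hA, hB]
    calc ∫⁻ w, ENNReal.ofReal (|w| ^ p) ∂ν
        = ∫⁻ _, (∫⁻ w, ENNReal.ofReal (|w| ^ p) ∂ν) ∂νy := by
          rw [lintegral_const]; simp [hνy]
      _ ≤ ∫⁻ y, ∫⁻ w, ENNReal.ofReal (|w - f y| ^ p) ∂ν ∂νy :=
          lintegral_mono fun y => hI (f y)
  -- convert to Bochner integrals
  have hofReal : ∀ x : ℝ, 0 ≤ x → ENNReal.ofReal x = (‖x‖₊ : ℝ≥0∞) := by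
    intro x hx
    rw [← Real.toNNReal_eq_nnnorm_of_nonneg hx]
    rfl
  have hBfin : ∫⁻ ω, ENNReal.ofReal (|X ω - g (Y ω)| ^ p) ∂μ ≠ ∞ := by
    have h2 : ∫⁻ ω, (‖|X ω - g (X ω + Z ω)| ^ p‖₊ : ℝ≥0∞) ∂μ < ∞ := hint.2
    refine ne_of_lt (lt_of_le_of_lt (le_of_eq ?_) h2)
    refine lintegral_congr fun ω => ?_
    rw [hofReal _ (by positivity)]
  have hAfin : ∫⁻ ω, ENNReal.ofReal (|W ω| ^ p) ∂μ ≠ ∞ :=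
    ne_of_lt (lt_of_le_of_lt hAB (lt_of_le_of_ne le_top hBfin))
  have hint1 : ∫ ω, |W ω| ^ p ∂μ
      = (∫⁻ ω, ENNReal.ofReal (|W ω| ^ p) ∂μ).toReal := by
    rw [integral_eq_lintegral_of_nonneg_ae (Filter.Eventually.of_forall fun ω => by positivity)
      ((hWm.abs.pow_const p).aestronglyMeasurable)]
  have hint2 : ∫ ω, |X ω - g (Y ω)| ^ p ∂μ
      = (∫⁻ ω, ENNReal.ofReal (|X ω - g (Y ω)| ^ p) ∂μ).toReal := by
    rw [integral_eq_lintegral_of_nonneg_ae (Filter.Eventually.of_forall fun ω => by positivity)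
      ((show Measurable fun ω => |X ω - g (Y ω)| ^ p from ((hXm.sub (hgm.comp hYm)).abs.pow_const p)).aestronglyMeasurable)]
  calc ∫ ω, |W ω| ^ p ∂μ
      = (∫⁻ ω, ENNReal.ofReal (|W ω| ^ p) ∂μ).toReal := hint1
    _ ≤ (∫⁻ ω, ENNReal.ofReal (|X ω - g (Y ω)| ^ p) ∂μ).toReal :=
        (ENNReal.toReal_le_toReal hAfin hBfin).mpr hAB
    _ = ∫ ω, |X ω - g (Y ω)| ^ p ∂μ := hint2.symm
end

section
/- Suppose X and Z have finite second moments and the MSE optimal estimator is linear: E[X | Y] = K·Y almost surely. Let u_i denote the i-th row of U, so that [UX]_i = ⟨u_i, X⟩ and [UZ]_i = ⟨u_i, Z⟩ are real random variables. Then for every i ∈ {1, …, m} the scalar characteristic functions satisfy the matching condition F′_{[UX]_i}(ω) · F_{[UZ]_i}(ω) = λ_i · F_{[UX]_i}(ω) · F′_{[UZ]_i}(ω) for all ω ∈ ℝ (the scalar condition F_{[UX]_i} = F_{[UZ]_i}^{λ_i} in logarithmic-derivative form). -/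
open MeasureTheory ProbabilityTheory

/-- Factorization of integrals of products of functions of independent random vectors. -/
lemma aux_indep_factor {Ω : Type*} [MeasurableSpace Ω] {μ : Measure Ω} [IsProbabilityMeasure μ]
    {m : ℕ} {X Z : Ω → Fin m → ℝ} (hXm : Measurable X) (hZm : Measurable Z)
    (hindep : IndepFun X Z μ) (F G : (Fin m → ℝ) → ℂ) (hF : Measurable F) (hG : Measurable G) :
    ∫ a, F (X a) * G (Z a) ∂μ = (∫ a, F (X a) ∂μ) * ∫ a, G (Z a) ∂μ := by
  haveI : IsProbabilityMeasure (μ.map X) := Measure.isProbabilityMeasure_map hXm.aemeasurable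
  haveI : IsProbabilityMeasure (μ.map Z) := Measure.isProbabilityMeasure_map hZm.aemeasurable
  have hmap := (indepFun_iff_map_prod_eq_prod_map_map hXm.aemeasurable hZm.aemeasurable).mp hindep
  calc ∫ a, F (X a) * G (Z a) ∂μ
      = ∫ p : (Fin m → ℝ) × (Fin m → ℝ), F p.1 * G p.2 ∂(μ.map (fun a => (X a, Z a))) :=
        (integral_map (hXm.prodMk hZm).aemeasurable
          ((hF.comp measurable_fst).mul (hG.comp measurable_snd)).aestronglyMeasurable).symm
    _ = ∫ p : (Fin m → ℝ) × (Fin m → ℝ), F p.1 * G p.2 ∂((μ.map X).prod (μ.map Z)) := by rw [hmap]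
    _ = (∫ x, F x ∂(μ.map X)) * ∫ y, G y ∂(μ.map Z) := integral_prod_mul F G
    _ = (∫ a, F (X a) ∂μ) * ∫ a, G (Z a) ∂μ := by
        rw [integral_map hXm.aemeasurable hF.aestronglyMeasurable,
          integral_map hZm.aemeasurable hG.aestronglyMeasurable]

/-- Splitting a complex integral of `f · exp(i h)` into real integrals. -/
lemma aux_cintegral_split {Ω : Type*} [MeasurableSpace Ω] (μ : Measure Ω)
    [IsProbabilityMeasure μ] (f h : Ω → ℝ) (hf : Integrable f μ) (hh : Measurable h) :
    ∫ a, (f a : ℂ) * Complex.exp ((h a : ℂ) * Complex.I) ∂μ =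
      ((∫ a, f a * Real.cos (h a) ∂μ : ℝ) : ℂ) +
        ((∫ a, f a * Real.sin (h a) ∂μ : ℝ) : ℂ) * Complex.I := by
  have hcos : Integrable (fun a => f a * Real.cos (h a)) μ := by
    have := hf.bdd_mul ((Real.measurable_cos.comp hh)).aestronglyMeasurable
      (c := 1) (Filter.Eventually.of_forall fun a => by simpa using Real.abs_cos_le_one (h a))
    simpa [mul_comm] using this
  have hsin : Integrable (fun a => f a * Real.sin (h a)) μ := by
    have := hf.bdd_mul ((Real.measurable_sin.comp hh)).aestronglyMeasurable
      (c := 1) (Filter.Eventually.of_forall fun a => by simpa using Real.abs_sin_le_one (h a))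
    simpa [mul_comm] using this
  have heq : ∀ a, (f a : ℂ) * Complex.exp ((h a : ℂ) * Complex.I) =
      ((f a * Real.cos (h a) : ℝ) : ℂ) + ((f a * Real.sin (h a) : ℝ) : ℂ) * Complex.I := by
    intro a
    rw [Complex.exp_mul_I, ← Complex.ofReal_cos, ← Complex.ofReal_sin]
    push_cast
    ring
  have h1 : Integrable (fun a => ((f a * Real.cos (h a) : ℝ) : ℂ)) μ := hcos.ofReal
  have h2 : Integrable (fun a => ((f a * Real.sin (h a) : ℝ) : ℂ)) μ := hsin.ofReal
  have key : ∀ g : Ω → ℝ, ∫ a, ((g a : ℝ) : ℂ) ∂μ = ((∫ a, g a ∂μ : ℝ) : ℂ) :=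
    fun g => integral_ofReal
  rw [integral_congr_ae (Filter.Eventually.of_forall heq),
    integral_add h1 (h2.mul_const Complex.I),
    integral_mul_const, key, key]

/-- Derivative of a scalar characteristic function. -/
lemma aux_cf_hasDeriv {Ω : Type*} [MeasurableSpace Ω] (μ : Measure Ω) [IsProbabilityMeasure μ]
    (A : Ω → ℝ) (hA : Measurable A) (hAi : Integrable A μ) (ω : ℝ) :
    HasDerivAt (fun w : ℝ => ∫ a, Complex.exp (((w * A a : ℝ) : ℂ) * Complex.I) ∂μ)
      (Complex.I * ∫ a, (A a : ℂ) * Complex.exp (((ω * A a : ℝ) : ℂ) * Complex.I) ∂μ) ω := by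
  set F : ℝ → Ω → ℂ := fun w a => Complex.exp (((w * A a : ℝ) : ℂ) * Complex.I) with hF
  set F' : ℝ → Ω → ℂ := fun w a =>
    ((A a : ℂ) * Complex.I) * Complex.exp (((w * A a : ℝ) : ℂ) * Complex.I) with hF'
  have hmeas : ∀ w : ℝ, AEStronglyMeasurable (F w) μ := by
    intro w
    apply Measurable.aestronglyMeasurable
    exact Complex.measurable_exp.comp ((Complex.measurable_ofReal.comp
      ((measurable_const.mul hA))).mul_const Complex.I)
  have hmeas' : AEStronglyMeasurable (F' ω) μ := by
    apply Measurable.aestronglyMeasurable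
    exact ((Complex.measurable_ofReal.comp hA).mul_const Complex.I).mul
      (Complex.measurable_exp.comp ((Complex.measurable_ofReal.comp
      ((measurable_const.mul hA))).mul_const Complex.I))
  have hnorm : ∀ (w : ℝ) (a : Ω), ‖F' w a‖ = |A a| := by
    intro w a
    rw [hF']
    simp only [norm_mul, Complex.norm_exp, Complex.norm_I]
    simp [Complex.norm_exp]
  have hFint : Integrable (F ω) μ := by
    apply Integrable.mono' (integrable_const 1) (hmeas ω)
    refine Filter.Eventually.of_forall fun a => ?_
    rw [hF]
    simp [Complex.norm_exp]
  have hbound : ∀ᵐ a ∂μ, ∀ w ∈ Metric.ball ω 1, ‖F' w a‖ ≤ |A a| :=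
    Filter.Eventually.of_forall fun a w _ => le_of_eq (hnorm w a)
  have hdiff : ∀ᵐ a ∂μ, ∀ w ∈ Metric.ball ω 1, HasDerivAt (F · a) (F' w a) w := by
    refine Filter.Eventually.of_forall fun a w _ => ?_
    have key : ∀ v : ℝ, F v a = Complex.exp ((v : ℂ) * ((A a : ℂ) * Complex.I)) := by
      intro v; rw [hF]; push_cast; ring_nf
    have h1 : HasDerivAt (fun z : ℂ => Complex.exp (z * ((A a : ℂ) * Complex.I)))
        (Complex.exp ((w : ℂ) * ((A a : ℂ) * Complex.I)) * ((A a : ℂ) * Complex.I)) (w : ℂ) := by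
      simpa using ((hasDerivAt_id (w : ℂ)).mul_const ((A a : ℂ) * Complex.I)).cexp
    have h2 := h1.comp_ofReal
    have h3 : HasDerivAt (F · a)
        (Complex.exp ((w : ℂ) * ((A a : ℂ) * Complex.I)) * ((A a : ℂ) * Complex.I)) w := by
      refine HasDerivAt.congr_of_eventuallyEq h2 ?_
      exact Filter.Eventually.of_forall fun v => (key v)
    convert h3 using 1
    rw [hF']; push_cast; ring_nf
  have hmain := hasDerivAt_integral_of_dominated_loc_of_deriv_le (Metric.ball_mem_nhds ω one_pos)
    (Filter.Eventually.of_forall hmeas) hFint hmeas' hbound hAi.abs hdiff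
  have h4 := hmain.2
  have h5 : ∫ a, F' ω a ∂μ =
      Complex.I * ∫ a, (A a : ℂ) * Complex.exp (((ω * A a : ℝ) : ℂ) * Complex.I) ∂μ := by
    rw [← integral_const_mul]
    congr 1; funext a; rw [hF']; ring
  rwa [h5] at h4

/-- Corollary 7 of the paper: if the vector MSE optimal estimator
is linear (`E[X|Y] = KY` a.s., componentwise), then for every `i` the scalar
characteristic functions of `[UX]_i = ⟨u_i, X⟩` and `[UZ]_i = ⟨u_i, Z⟩` satisfy the
matching condition `F′_{[UX]_i}(ω) F_{[UZ]_i}(ω) = λ_i F_{[UX]_i}(ω) F′_{[UZ]_i}(ω)`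
for all `ω ∈ ℝ`. -/
theorem vector_mse_linear_implies_marginal_matching
    {Ω : Type*} [MeasurableSpace Ω] (μ : Measure Ω) [IsProbabilityMeasure μ]
    (m : ℕ) (X Z : Ω → Fin m → ℝ)
    (hXm : Measurable X) (hZm : Measurable Z)
    (hindep : IndepFun X Z μ)
    (hXint : ∀ i, Integrable (fun ω => X ω i) μ)
    (hZint : ∀ i, Integrable (fun ω => Z ω i) μ)
    (hXmean : ∀ i, ∫ ω, X ω i ∂μ = 0) (hZmean : ∀ i, ∫ ω, Z ω i ∂μ = 0)
    (hX2 : ∀ i j, Integrable (fun ω => X ω i * X ω j) μ)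
    (hZ2 : ∀ i j, Integrable (fun ω => Z ω i * Z ω j) μ)
    (RX RZ : Matrix (Fin m) (Fin m) ℝ)
    (hRX : ∀ i j, RX i j = ∫ ω, X ω i * X ω j ∂μ)
    (hRZ : ∀ i j, RZ i j = ∫ ω, Z ω i * Z ω j ∂μ)
    (hRXpd : RX.PosDef) (hRZpd : RZ.PosDef)
    (K : Matrix (Fin m) (Fin m) ℝ) (hK : K = RX * (RX + RZ)⁻¹)
    (U : Matrix (Fin m) (Fin m) ℝ) (hU : IsUnit U.det)
    (lam : Fin m → ℝ)
    (hdiag : RX * RZ⁻¹ = U⁻¹ * Matrix.diagonal lam * U)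
    (hlin : ∀ i, μ[(fun ω => X ω i) |
        MeasurableSpace.comap (fun ω => X ω + Z ω) inferInstance] =ᵐ[μ]
        fun ω => K.mulVec (X ω + Z ω) i) :
    ∀ i : Fin m, ∀ ω : ℝ,
      deriv (fun w : ℝ =>
          ∫ a, Complex.exp (((w * U.mulVec (X a) i : ℝ) : ℂ) * Complex.I) ∂μ) ω *
        (∫ a, Complex.exp (((ω * U.mulVec (Z a) i : ℝ) : ℂ) * Complex.I) ∂μ) =
      (lam i : ℂ) *
        (∫ a, Complex.exp (((ω * U.mulVec (X a) i : ℝ) : ℂ) * Complex.I) ∂μ) *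
        deriv (fun w : ℝ =>
          ∫ a, Complex.exp (((w * U.mulVec (Z a) i : ℝ) : ℂ) * Complex.I) ∂μ) ω := by
  intro i ω
  -- scalar projections A = [UX]_i, B = [UZ]_i
  set A : Ω → ℝ := fun a => U.mulVec (X a) i with hAdef
  set B : Ω → ℝ := fun a => U.mulVec (Z a) i with hBdef
  have hmv : ∀ (x : Fin m → ℝ), U.mulVec x i = ∑ j, U i j * x j := by
    intro x; simp [Matrix.mulVec, dotProduct]
  have hvm : Measurable (fun v : Fin m → ℝ => U.mulVec v i) := by
    simp only [hmv]
    exact Finset.measurable_sum _ fun j _ => (measurable_pi_apply j).const_mul _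
  have hAm : Measurable A := hvm.comp hXm
  have hBm : Measurable B := hvm.comp hZm
  have hAint : Integrable A μ := by
    have : A = fun a => ∑ j, U i j * X a j := by funext a; rw [hAdef]; exact hmv (X a)
    rw [this]
    exact integrable_finset_sum _ fun j _ => (hXint j).const_mul _
  have hBint : Integrable B μ := by
    have : B = fun a => ∑ j, U i j * Z a j := by funext a; rw [hBdef]; exact hmv (Z a)
    rw [this]
    exact integrable_finset_sum _ fun j _ => (hZint j).const_mul _
  have hnorm1 : ∀ r : ℝ, ‖Complex.exp ((r : ℂ) * Complex.I)‖ = 1 := by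
    intro r; simp [Complex.norm_exp]
  -- measurability of the complex exponentials
  have hexpm : Measurable (fun v : Fin m → ℝ =>
      Complex.exp (((ω * U.mulVec v i : ℝ) : ℂ) * Complex.I)) :=
    Complex.measurable_exp.comp
      ((Complex.measurable_ofReal.comp (hvm.const_mul ω)).mul_const _)
  have heXm : Measurable (fun a => Complex.exp (((ω * A a : ℝ) : ℂ) * Complex.I)) :=
    Complex.measurable_exp.comp
      ((Complex.measurable_ofReal.comp (hAm.const_mul ω)).mul_const _)
  have heZm : Measurable (fun a => Complex.exp (((ω * B a : ℝ) : ℂ) * Complex.I)) :=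
    Complex.measurable_exp.comp
      ((Complex.measurable_ofReal.comp (hBm.const_mul ω)).mul_const _)
  have heYm : Measurable (fun a => Complex.exp (((ω * (A a + B a) : ℝ) : ℂ) * Complex.I)) :=
    Complex.measurable_exp.comp
      ((Complex.measurable_ofReal.comp ((hAm.add hBm).const_mul ω)).mul_const _)
  -- integrability of (real) · (bounded complex)
  have hbdd_mul : ∀ (f : Ω → ℝ) (g : Ω → ℂ), Integrable f μ → Measurable g →
      (∀ a, ‖g a‖ ≤ 1) → Integrable (fun a => (f a : ℂ) * g a) μ := by
    intro f g hf hg hgb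
    have h0 : Integrable (fun a => ((f a : ℝ) : ℂ)) μ := hf.ofReal
    have h1 := h0.bdd_mul hg.aestronglyMeasurable (c := 1) (Filter.Eventually.of_forall hgb)
    have h2 : Integrable (fun a => g a * (f a : ℂ)) μ := h1
    exact h2.congr (Filter.Eventually.of_forall fun a => mul_comm _ _)
  have hIeY : ∀ (f : Ω → ℝ), Integrable f μ →
      Integrable (fun a => (f a : ℂ) * Complex.exp (((ω * (A a + B a) : ℝ) : ℂ) * Complex.I)) μ :=
    fun f hf => hbdd_mul f _ hf heYm (fun a => le_of_eq (hnorm1 _))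
  have hIeX : ∀ (f : Ω → ℝ), Integrable f μ →
      Integrable (fun a => (f a : ℂ) * Complex.exp (((ω * A a : ℝ) : ℂ) * Complex.I)) μ :=
    fun f hf => hbdd_mul f _ hf heXm (fun a => le_of_eq (hnorm1 _))
  have hIeZ : ∀ (f : Ω → ℝ), Integrable f μ →
      Integrable (fun a => (f a : ℂ) * Complex.exp (((ω * B a : ℝ) : ℂ) * Complex.I)) μ :=
    fun f hf => hbdd_mul f _ hf heZm (fun a => le_of_eq (hnorm1 _))
  -- the split of the exponential of the sum
  have hsplit : ∀ a, Complex.exp (((ω * (A a + B a) : ℝ) : ℂ) * Complex.I) =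
      Complex.exp (((ω * A a : ℝ) : ℂ) * Complex.I) *
        Complex.exp (((ω * B a : ℝ) : ℂ) * Complex.I) := by
    intro a; rw [← Complex.exp_add]; congr 1; push_cast; ring
  -- abbreviations as plain definitions
  set cX : ℂ := ∫ a, Complex.exp (((ω * A a : ℝ) : ℂ) * Complex.I) ∂μ with hcX
  set cZ : ℂ := ∫ a, Complex.exp (((ω * B a : ℝ) : ℂ) * Complex.I) ∂μ with hcZ
  set p : Fin m → ℂ :=
    fun j => ∫ a, (X a j : ℂ) * Complex.exp (((ω * A a : ℝ) : ℂ) * Complex.I) ∂μ with hp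
  set q : Fin m → ℂ :=
    fun j => ∫ a, (Z a j : ℂ) * Complex.exp (((ω * B a : ℝ) : ℂ) * Complex.I) ∂μ with hq
  -- independence factorizations
  have claim1 : ∀ j, ∫ a, (X a j : ℂ) *
      Complex.exp (((ω * (A a + B a) : ℝ) : ℂ) * Complex.I) ∂μ = p j * cZ := by
    intro j
    have hfac := aux_indep_factor hXm hZm hindep
      (fun v => (v j : ℂ) * Complex.exp (((ω * U.mulVec v i : ℝ) : ℂ) * Complex.I))
      (fun v => Complex.exp (((ω * U.mulVec v i : ℝ) : ℂ) * Complex.I))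
      ((Complex.measurable_ofReal.comp (measurable_pi_apply j)).mul hexpm) hexpm
    calc ∫ a, (X a j : ℂ) * Complex.exp (((ω * (A a + B a) : ℝ) : ℂ) * Complex.I) ∂μ
        = ∫ a, ((X a j : ℂ) * Complex.exp (((ω * A a : ℝ) : ℂ) * Complex.I)) *
            Complex.exp (((ω * B a : ℝ) : ℂ) * Complex.I) ∂μ := by
          refine integral_congr_ae (Filter.Eventually.of_forall fun a => ?_)
          simp only [hsplit]; ring
      _ = p j * cZ := hfac
  have claim2 : ∀ j, ∫ a, (Z a j : ℂ) *
      Complex.exp (((ω * (A a + B a) : ℝ) : ℂ) * Complex.I) ∂μ = cX * q j := by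
    intro j
    have hfac := aux_indep_factor hXm hZm hindep
      (fun v => Complex.exp (((ω * U.mulVec v i : ℝ) : ℂ) * Complex.I))
      (fun v => (v j : ℂ) * Complex.exp (((ω * U.mulVec v i : ℝ) : ℂ) * Complex.I))
      hexpm ((Complex.measurable_ofReal.comp (measurable_pi_apply j)).mul hexpm)
    calc ∫ a, (Z a j : ℂ) * Complex.exp (((ω * (A a + B a) : ℝ) : ℂ) * Complex.I) ∂μ
        = ∫ a, Complex.exp (((ω * A a : ℝ) : ℂ) * Complex.I) *
            ((Z a j : ℂ) * Complex.exp (((ω * B a : ℝ) : ℂ) * Complex.I)) ∂μ := by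
          refine integral_congr_ae (Filter.Eventually.of_forall fun a => ?_)
          simp only [hsplit]; ring
      _ = cX * q j := hfac
  -- the conditional-expectation (orthogonality) identity, real version
  have hYm : Measurable (fun a => X a + Z a) := hXm.add hZm
  have hmY : MeasurableSpace.comap (fun a => X a + Z a) inferInstance ≤ _ := hYm.comap_le
  have hreal : ∀ (j : Fin m) (g0 : (Fin m → ℝ) → ℝ), Measurable g0 → (∀ v, |g0 v| ≤ 1) →
      ∫ a, X a j * g0 (X a + Z a) ∂μ =
        ∫ a, (K.mulVec (X a + Z a) j) * g0 (X a + Z a) ∂μ := by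
    intro j g0 hg0 hg0b
    have hYc : Measurable[MeasurableSpace.comap (fun a => X a + Z a) inferInstance]
        (fun a => X a + Z a) := Measurable.of_comap_le le_rfl
    have hg0Y : StronglyMeasurable[MeasurableSpace.comap (fun a => X a + Z a) inferInstance]
        (fun a => g0 (X a + Z a)) := (hg0.comp hYc).stronglyMeasurable
    have hint1 : Integrable ((fun a => g0 (X a + Z a)) * (fun a => X a j)) μ :=
      (hXint j).bdd_mul (hg0.comp hYm).aestronglyMeasurable
        (c := 1) (Filter.Eventually.of_forall fun a => by simpa using hg0b (X a + Z a))
    have hpull := condExp_mul_of_stronglyMeasurable_left hg0Y hint1 (hXint j)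
    calc ∫ a, X a j * g0 (X a + Z a) ∂μ
        = ∫ a, ((fun a => g0 (X a + Z a)) * (fun a => X a j)) a ∂μ := by
          refine integral_congr_ae (Filter.Eventually.of_forall fun a => ?_)
          simp [mul_comm]
      _ = ∫ a, (μ[(fun a => g0 (X a + Z a)) * (fun a => X a j)|
            MeasurableSpace.comap (fun a => X a + Z a) inferInstance]) a ∂μ :=
          (integral_condExp hmY).symm
      _ = ∫ a, g0 (X a + Z a) * (μ[(fun a => X a j)|
            MeasurableSpace.comap (fun a => X a + Z a) inferInstance]) a ∂μ := by
          refine integral_congr_ae (hpull.mono fun a ha => ?_)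
          simpa using ha
      _ = ∫ a, g0 (X a + Z a) * K.mulVec (X a + Z a) j ∂μ := by
          refine integral_congr_ae ((hlin j).mono fun a ha => ?_)
          simp only [ha]
      _ = ∫ a, (K.mulVec (X a + Z a) j) * g0 (X a + Z a) ∂μ := by
          refine integral_congr_ae (Filter.Eventually.of_forall fun a => ?_)
          simp [mul_comm]
  have hKY2 : ∀ (a : Ω) (j : Fin m), K.mulVec (X a + Z a) j = ∑ k, K j k * (X a k + Z a k) := by
    intro a j; simp [Matrix.mulVec, dotProduct]
  have hKYint : ∀ j, Integrable (fun a => K.mulVec (X a + Z a) j) μ := by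
    intro j
    have : (fun a => K.mulVec (X a + Z a) j) = fun a => ∑ k, K j k * (X a k + Z a k) := by
      funext a; exact hKY2 a j
    rw [this]
    exact integrable_finset_sum _ fun k _ => (((hXint k).add (hZint k)).const_mul _)
  have hABm : Measurable (fun a => ω * (A a + B a)) := (hAm.add hBm).const_mul ω
  have hAB : ∀ a, U.mulVec (X a + Z a) i = A a + B a := by
    intro a
    rw [hAdef, hBdef]
    simp [Matrix.mulVec_add]
  -- conditional-expectation identity, complex version
  have claim3 : ∀ j, ∫ a, (X a j : ℂ) *
        Complex.exp (((ω * (A a + B a) : ℝ) : ℂ) * Complex.I) ∂μ =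
      ∫ a, ((K.mulVec (X a + Z a) j : ℝ) : ℂ) *
        Complex.exp (((ω * (A a + B a) : ℝ) : ℂ) * Complex.I) ∂μ := by
    intro j
    have hcosEq := hreal j (fun v => Real.cos (ω * U.mulVec v i))
      (Real.measurable_cos.comp (hvm.const_mul ω)) (fun v => Real.abs_cos_le_one _)
    have hsinEq := hreal j (fun v => Real.sin (ω * U.mulVec v i))
      (Real.measurable_sin.comp (hvm.const_mul ω)) (fun v => Real.abs_sin_le_one _)
    simp only [hAB] at hcosEq hsinEq
    rw [aux_cintegral_split μ (fun a => X a j) (fun a => ω * (A a + B a)) (hXint j) hABm,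
      aux_cintegral_split μ (fun a => K.mulVec (X a + Z a) j) (fun a => ω * (A a + B a))
        (hKYint j) hABm, hcosEq, hsinEq]
  -- combine: the key scalar equation
  have claim4 : ∀ j, p j * cZ = ∑ k, (K j k : ℂ) * (p k * cZ + cX * q k) := by
    intro j
    rw [← claim1 j, claim3 j]
    have expand : ∀ a, ((K.mulVec (X a + Z a) j : ℝ) : ℂ) *
        Complex.exp (((ω * (A a + B a) : ℝ) : ℂ) * Complex.I) =
        ∑ k, (K j k : ℂ) *
          ((X a k : ℂ) * Complex.exp (((ω * (A a + B a) : ℝ) : ℂ) * Complex.I) +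
           (Z a k : ℂ) * Complex.exp (((ω * (A a + B a) : ℝ) : ℂ) * Complex.I)) := by
      intro a
      rw [hKY2 a j]
      push_cast
      rw [Finset.sum_mul]
      exact Finset.sum_congr rfl fun k _ => by ring
    rw [integral_congr_ae (Filter.Eventually.of_forall expand), integral_finset_sum]
    · refine Finset.sum_congr rfl fun k _ => ?_
      rw [integral_const_mul, integral_add (hIeY _ (hXint k)) (hIeY _ (hZint k)),
        claim1 k, claim2 k]
    · exact fun k _ => ((hIeY _ (hXint k)).add (hIeY _ (hZint k))).const_mul _
  -- matrix algebra over ℝ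
  have hSu : IsUnit (RX + RZ).det := (hRXpd.add hRZpd).det_pos.ne'.isUnit
  have hRZu : IsUnit RZ.det := hRZpd.det_pos.ne'.isUnit
  have hM2 : RX * RZ⁻¹ = (RX * RZ⁻¹) * K + K := by
    rw [hK]
    calc RX * RZ⁻¹ = RX * RZ⁻¹ * ((RX + RZ) * (RX + RZ)⁻¹) := by
          rw [Matrix.mul_nonsing_inv _ hSu, mul_one]
      _ = RX * RZ⁻¹ * (RX * (RX + RZ)⁻¹) + RX * RZ⁻¹ * (RZ * (RX + RZ)⁻¹) := by
          rw [Matrix.add_mul, mul_add]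
      _ = RX * RZ⁻¹ * (RX * (RX + RZ)⁻¹) + RX * (RX + RZ)⁻¹ := by
          congr 1
          rw [← mul_assoc, mul_assoc RX RZ⁻¹ RZ, Matrix.nonsing_inv_mul _ hRZu, mul_one]
  have hMK : (RX * RZ⁻¹) * K = RX * RZ⁻¹ - K := by
    rw [eq_sub_iff_add_eq]; exact hM2.symm
  have hM1 : (RX * RZ⁻¹) * (1 - K) = K := by
    rw [mul_sub, mul_one, hMK, sub_sub_cancel]
  have hUM : U * (RX * RZ⁻¹) = Matrix.diagonal lam * U := by
    rw [hdiag, ← mul_assoc, ← mul_assoc, Matrix.mul_nonsing_inv _ hU, one_mul]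
  -- complexify
  set Φ : Matrix (Fin m) (Fin m) ℝ →+* Matrix (Fin m) (Fin m) ℂ :=
    (Complex.ofRealHom).mapMatrix with hΦ
  have hΦapp : ∀ (M : Matrix (Fin m) (Fin m) ℝ) (j k : Fin m), Φ M j k = ((M j k : ℝ) : ℂ) := by
    intro M j k
    simp [hΦ, RingHom.mapMatrix_apply, Matrix.map_apply]
  have hMc1 : Φ (RX * RZ⁻¹) * (1 - Φ K) = Φ K := by
    have := congrArg Φ hM1
    simpa [map_mul, map_sub, map_one] using this
  have hMc2 : Φ (RX * RZ⁻¹) = Φ (RX * RZ⁻¹) * Φ K + Φ K := by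
    have := congrArg Φ hM2
    simpa [map_mul, map_add] using this
  have hUMc : Φ U * Φ (RX * RZ⁻¹) = Φ (Matrix.diagonal lam) * Φ U := by
    have := congrArg Φ hUM
    simpa [map_mul] using this
  have hDc : Φ (Matrix.diagonal lam) = Matrix.diagonal (fun k => ((lam k : ℝ) : ℂ)) := by
    rw [hΦ, RingHom.mapMatrix_apply, Matrix.diagonal_map (by simp)]
    rfl
  -- vector identities
  have hvec : (fun j => p j * cZ) =
      (Φ K).mulVec ((fun j => p j * cZ) + (fun j => cX * q j)) := by
    funext j
    rw [claim4 j]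
    simp only [Matrix.mulVec, dotProduct, Pi.add_apply, hΦapp]
  obtain ⟨V, hV⟩ : ∃ V, V = fun j => p j * cZ := ⟨_, rfl⟩
  obtain ⟨W, hW⟩ : ∃ W, W = fun j => cX * q j := ⟨_, rfl⟩
  have hvecVW : V = (Φ K).mulVec V + (Φ K).mulVec W := by
    rw [hV, hW, ← Matrix.mulVec_add]
    exact hvec
  have e1 : V - (Φ K).mulVec V = (Φ K).mulVec W := sub_eq_iff_eq_add'.mpr hvecVW
  have e2 : (Φ K).mulVec V = (Φ (RX * RZ⁻¹)).mulVec ((Φ K).mulVec W) := by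
    calc (Φ K).mulVec V = (Φ (RX * RZ⁻¹) * (1 - Φ K)).mulVec V := by rw [hMc1]
      _ = (Φ (RX * RZ⁻¹)).mulVec ((1 - Φ K).mulVec V) := by rw [Matrix.mulVec_mulVec]
      _ = (Φ (RX * RZ⁻¹)).mulVec (V - (Φ K).mulVec V) := by
          rw [Matrix.sub_mulVec, Matrix.one_mulVec]
      _ = (Φ (RX * RZ⁻¹)).mulVec ((Φ K).mulVec W) := by rw [e1]
  have e3 : V = (Φ (RX * RZ⁻¹)).mulVec W := by
    calc V = (Φ K).mulVec V + (Φ K).mulVec W := hvecVW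
      _ = (Φ (RX * RZ⁻¹) * Φ K).mulVec W + (Φ K).mulVec W := by
          rw [e2, Matrix.mulVec_mulVec]
      _ = (Φ (RX * RZ⁻¹) * Φ K + Φ K).mulVec W := (Matrix.add_mulVec _ _ _).symm
      _ = (Φ (RX * RZ⁻¹)).mulVec W := by rw [← hMc2]
  have e4 : ((Φ U).mulVec V) i = ((lam i : ℝ) : ℂ) * ((Φ U).mulVec W) i := by
    calc ((Φ U).mulVec V) i
        = ((Φ U).mulVec ((Φ (RX * RZ⁻¹)).mulVec W)) i := by rw [← e3]
      _ = ((Φ U * Φ (RX * RZ⁻¹)).mulVec W) i := by rw [Matrix.mulVec_mulVec]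
      _ = ((Φ (Matrix.diagonal lam) * Φ U).mulVec W) i := by rw [hUMc]
      _ = ((Φ (Matrix.diagonal lam)).mulVec ((Φ U).mulVec W)) i := by
          rw [Matrix.mulVec_mulVec]
      _ = ((lam i : ℝ) : ℂ) * ((Φ U).mulVec W) i := by
          rw [hDc, Matrix.mulVec_diagonal]
  -- compute the components
  have hsumX : ∀ a, ((A a : ℝ) : ℂ) = ∑ j, ((U i j : ℝ) : ℂ) * ((X a j : ℝ) : ℂ) := by
    intro a
    rw [hAdef]
    push_cast [hmv (X a)]
    rfl
  have hsumZ : ∀ a, ((B a : ℝ) : ℂ) = ∑ j, ((U i j : ℝ) : ℂ) * ((Z a j : ℝ) : ℂ) := by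
    intro a
    rw [hBdef]
    push_cast [hmv (Z a)]
    rfl
  have hUvV : ((Φ U).mulVec V) i =
      cZ * ∫ a, (A a : ℂ) * Complex.exp (((ω * A a : ℝ) : ℂ) * Complex.I) ∂μ := by
    have step1 : ((Φ U).mulVec V) i = ∑ j, ((U i j : ℝ) : ℂ) * (p j * cZ) := by
      rw [hV]
      simp only [Matrix.mulVec, dotProduct, hΦapp]
    have step2 : ∑ j, ((U i j : ℝ) : ℂ) * p j =
        ∫ a, (A a : ℂ) * Complex.exp (((ω * A a : ℝ) : ℂ) * Complex.I) ∂μ := by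
      rw [hp]
      calc ∑ j, ((U i j : ℝ) : ℂ) *
            ∫ a, (X a j : ℂ) * Complex.exp (((ω * A a : ℝ) : ℂ) * Complex.I) ∂μ
          = ∑ j, ∫ a, ((U i j : ℝ) : ℂ) *
              ((X a j : ℂ) * Complex.exp (((ω * A a : ℝ) : ℂ) * Complex.I)) ∂μ :=
            Finset.sum_congr rfl fun j _ => (integral_const_mul _ _).symm
        _ = ∫ a, ∑ j, ((U i j : ℝ) : ℂ) *
              ((X a j : ℂ) * Complex.exp (((ω * A a : ℝ) : ℂ) * Complex.I)) ∂μ :=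
            (integral_finset_sum _ fun j _ => (hIeX _ (hXint j)).const_mul _).symm
        _ = ∫ a, (A a : ℂ) * Complex.exp (((ω * A a : ℝ) : ℂ) * Complex.I) ∂μ := by
            refine integral_congr_ae (Filter.Eventually.of_forall fun a => ?_)
            simp only [hsumX a, Finset.sum_mul]
            exact Finset.sum_congr rfl fun j _ => by ring
    calc ((Φ U).mulVec V) i = ∑ j, ((U i j : ℝ) : ℂ) * (p j * cZ) := step1
      _ = cZ * ∑ j, ((U i j : ℝ) : ℂ) * p j := by
          rw [Finset.mul_sum]
          exact Finset.sum_congr rfl fun j _ => by ring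
      _ = cZ * ∫ a, (A a : ℂ) * Complex.exp (((ω * A a : ℝ) : ℂ) * Complex.I) ∂μ := by
          rw [step2]
  have hUwW : ((Φ U).mulVec W) i =
      cX * ∫ a, (B a : ℂ) * Complex.exp (((ω * B a : ℝ) : ℂ) * Complex.I) ∂μ := by
    have step1 : ((Φ U).mulVec W) i = ∑ j, ((U i j : ℝ) : ℂ) * (cX * q j) := by
      rw [hW]
      simp only [Matrix.mulVec, dotProduct, hΦapp]
    have step2 : ∑ j, ((U i j : ℝ) : ℂ) * q j =
        ∫ a, (B a : ℂ) * Complex.exp (((ω * B a : ℝ) : ℂ) * Complex.I) ∂μ := by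
      rw [hq]
      calc ∑ j, ((U i j : ℝ) : ℂ) *
            ∫ a, (Z a j : ℂ) * Complex.exp (((ω * B a : ℝ) : ℂ) * Complex.I) ∂μ
          = ∑ j, ∫ a, ((U i j : ℝ) : ℂ) *
              ((Z a j : ℂ) * Complex.exp (((ω * B a : ℝ) : ℂ) * Complex.I)) ∂μ :=
            Finset.sum_congr rfl fun j _ => (integral_const_mul _ _).symm
        _ = ∫ a, ∑ j, ((U i j : ℝ) : ℂ) *
              ((Z a j : ℂ) * Complex.exp (((ω * B a : ℝ) : ℂ) * Complex.I)) ∂μ :=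
            (integral_finset_sum _ fun j _ => (hIeZ _ (hZint j)).const_mul _).symm
        _ = ∫ a, (B a : ℂ) * Complex.exp (((ω * B a : ℝ) : ℂ) * Complex.I) ∂μ := by
            refine integral_congr_ae (Filter.Eventually.of_forall fun a => ?_)
            simp only [hsumZ a, Finset.sum_mul]
            exact Finset.sum_congr rfl fun j _ => by ring
    calc ((Φ U).mulVec W) i = ∑ j, ((U i j : ℝ) : ℂ) * (cX * q j) := step1
      _ = cX * ∑ j, ((U i j : ℝ) : ℂ) * q j := by
          rw [Finset.mul_sum]
          exact Finset.sum_congr rfl fun j _ => by ring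
      _ = cX * ∫ a, (B a : ℂ) * Complex.exp (((ω * B a : ℝ) : ℂ) * Complex.I) ∂μ := by
          rw [step2]
  have hcenter : cZ * (∫ a, (A a : ℂ) * Complex.exp (((ω * A a : ℝ) : ℂ) * Complex.I) ∂μ) =
      ((lam i : ℝ) : ℂ) *
        (cX * ∫ a, (B a : ℂ) * Complex.exp (((ω * B a : ℝ) : ℂ) * Complex.I) ∂μ) := by
    rw [← hUvV, ← hUwW]
    exact e4
  -- finish using the derivatives of the characteristic functions
  have hdX := (aux_cf_hasDeriv μ A hAm hAint ω).deriv
  have hdZ := (aux_cf_hasDeriv μ B hBm hBint ω).deriv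
  rw [hdX, hdZ]
  linear_combination Complex.I * hcenter
end
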